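/- Let c > 0. A monetary risk measure ρ: 𝒳 → ℝ is 𝔢_c-SD-consistent if and only if there exists a family 𝒢 of nondecreasing functions g: [0,1] → (−∞,0) such that for all X ∈ 𝒳, ρ(X) = inf_{g∈𝒢} sup_{p∈[0,1]} (1/c)·log( g(p) / ES_p(e^{cX}) ). -/

import Mathlib

open MeasureTheory Filter Set

noncomputable section

namespace Paper

variable {Ω : Type*} [MeasurableSpace Ω]

/-- The probability measure `P` is atomless. -/
def Atomless (P : Measure Ω) : Prop :=
  ∀ s : Set Ω, MeasurableSet s → 0 < P s →
    ∃ t : Set Ω, MeasurableSet t ∧ t ⊆ s ∧ 0 < P t ∧ P t < P s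

/-- `𝒳`: the essentially bounded random variables. -/
def MemX (P : Measure Ω) (X : Ω → ℝ) : Prop :=
  Measurable X ∧ ∃ C : ℝ, ∀ᵐ ω ∂P, |X ω| ≤ C

/-- `𝒰(I)`: twice differentiable functions with everywhere positive first
derivative on `I`. -/
def IsUtility (I : Set ℝ) (u : ℝ → ℝ) : Prop :=
  (∀ x ∈ I, DifferentiableAt ℝ u x) ∧
  (∀ x ∈ I, DifferentiableAt ℝ (deriv u) x) ∧
  (∀ x ∈ I, 0 < deriv u x)

/-- Arrow–Pratt coefficient of absolute risk aversion. -/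
def RA (u : ℝ → ℝ) (x : ℝ) : ℝ := -deriv (deriv u) x / deriv u x

/-- `𝓛¹_v`: `I`-valued random variables `X` with `v(X)` integrable. -/
def MemL1 (P : Measure Ω) (I : Set ℝ) (v : ℝ → ℝ) (X : Ω → ℝ) : Prop :=
  Measurable X ∧ (∀ᵐ ω ∂P, X ω ∈ I) ∧ Integrable (fun ω => v (X ω)) P

/-- The `v`-SD order: `X ≤_{v-SD} Y`. -/
def vSD (P : Measure Ω) (I : Set ℝ) (v : ℝ → ℝ) (X Y : Ω → ℝ) : Prop :=
  ∀ u : ℝ → ℝ, IsUtility I u → (∀ x ∈ I, RA v x ≤ RA u x) →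
    Integrable (fun ω => u (X ω)) P → Integrable (fun ω => u (Y ω)) P →
    ∫ ω, u (X ω) ∂P ≤ ∫ ω, u (Y ω) ∂P

/-- Second-order stochastic dominance. -/
def SSD (P : Measure Ω) (X Y : Ω → ℝ) : Prop :=
  ∀ u : ℝ → ℝ, IsUtility Set.univ u → ConcaveOn ℝ Set.univ u →
    Integrable (fun ω => u (X ω)) P → Integrable (fun ω => u (Y ω)) P →
    ∫ ω, u (X ω) ∂P ≤ ∫ ω, u (Y ω) ∂P

/-- Monetary risk measure: antitone and cash-additive on `𝒳`. -/
def IsRiskMeasure (P : Measure Ω) (ρ : (Ω → ℝ) → ℝ) : Prop :=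
  (∀ X Y : Ω → ℝ, MemX P X → MemX P Y → (∀ᵐ ω ∂P, X ω ≤ Y ω) → ρ Y ≤ ρ X) ∧
  (∀ X : Ω → ℝ, MemX P X → ∀ c : ℝ, ρ (fun ω => X ω + c) = ρ X - c)

/-- Worst-case risk measure `ρ^w(X) = ess sup (-X)`. -/
def rhoW (P : Measure Ω) (X : Ω → ℝ) : ℝ :=
  sInf {m : ℝ | ∀ᵐ ω ∂P, -X ω ≤ m}

/-- `v`-SD-consistency of `φ` on the domain `D`. -/
def VSDConsistent (P : Measure Ω) (I : Set ℝ) (v : ℝ → ℝ)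
    (D : Set (Ω → ℝ)) (φ : (Ω → ℝ) → ℝ) : Prop :=
  ∀ X Y : Ω → ℝ, X ∈ D → Y ∈ D → MemL1 P I v X → MemL1 P I v Y →
    vSD P I v X Y → φ Y ≤ φ X

/-- `𝒞`: the a.s. strictly positive bounded random variables. -/
def MemC (P : Measure Ω) (X : Ω → ℝ) : Prop :=
  MemX P X ∧ ∀ᵐ ω ∂P, 0 < X ω

/-- `𝓔 = {e^Y : Y ∈ 𝒳}` (up to a.s. equality). -/
def MemE (P : Measure Ω) (X : Ω → ℝ) : Prop :=
  ∃ Y : Ω → ℝ, MemX P Y ∧ ∀ᵐ ω ∂P, X ω = Real.exp (Y ω)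

/-- Return risk measure. -/
def IsRRM (P : Measure Ω) (η : (Ω → ℝ) → ℝ) : Prop :=
  (∀ X : Ω → ℝ, MemC P X → 0 < η X) ∧
  (∀ X Y : Ω → ℝ, MemC P X → MemC P Y → (∀ᵐ ω ∂P, X ω ≤ Y ω) → η Y ≤ η X) ∧
  (∀ X : Ω → ℝ, MemC P X → ∀ t : ℝ, 0 < t → η (fun ω => t * X ω) = t⁻¹ * η X)

/-- Loss-based return risk measure. -/
def IsLossRRM (P : Measure Ω) (κ : (Ω → ℝ) → ℝ) : Prop :=
  (∀ L : Ω → ℝ, MemC P L → 0 < κ L) ∧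
  (∀ L L' : Ω → ℝ, MemC P L → MemC P L' → (∀ᵐ ω ∂P, L' ω ≤ L ω) → κ L' ≤ κ L) ∧
  (∀ L : Ω → ℝ, MemC P L → ∀ t : ℝ, 0 < t → κ (fun ω => t * L ω) = t * κ L)

/-- Base risk measure `ρ_{Z,v}`. -/
def baseRM (P : Measure Ω) (v : ℝ → ℝ) (Z X : Ω → ℝ) : ℝ :=
  sInf {m : ℝ | vSD P Set.univ v Z (fun ω => X ω + m)}

/-- Lower quantile function. -/
def qf (P : Measure Ω) (X : Ω → ℝ) (r : ℝ) : ℝ :=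
  sInf {x : ℝ | r ≤ (P {ω | X ω ≤ x}).toReal}

/-- Expected Shortfall at level `p`. -/
def ES (P : Measure Ω) (p : ℝ) (X : Ω → ℝ) : ℝ :=
  if p < 1 then -(1 / (1 - p)) * ∫ r in (0:ℝ)..(1 - p), qf P X r
  else rhoW P X


/-! ### Auxiliary development for Statement 7 -/

section Aux

variable {P : Measure Ω} [IsProbabilityMeasure P]

/-- The CDF of `Z` under `P`, as a real-valued function. -/
def cdf' (P : Measure Ω) (Z : Ω → ℝ) (x : ℝ) : ℝ := (P {ω | Z ω ≤ x}).toReal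

/-- A bounded, a.s. positive random variable. -/
structure BddP (P : Measure Ω) (Z : Ω → ℝ) (a b : ℝ) : Prop where
  meas : Measurable Z
  apos : 0 < a
  mem : ∀ᵐ ω ∂P, Z ω ∈ Set.Icc a b

variable {Z : Ω → ℝ} {a b : ℝ}

lemma BddP.ab (hB : BddP P Z a b) : a ≤ b := by
  haveI : (MeasureTheory.ae P).NeBot := ae_neBot.mpr (IsProbabilityMeasure.ne_zero P)
  rcases hB.mem.exists with ⟨ω, hω⟩
  exact hω.1.trans hω.2

lemma cdf'_mono : Monotone (cdf' P Z) := fun x y hxy =>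
  ENNReal.toReal_mono (measure_ne_top _ _)
    (measure_mono fun ω (h : Z ω ≤ x) => h.trans hxy)

lemma cdf'_nonneg (x : ℝ) : 0 ≤ cdf' P Z x := ENNReal.toReal_nonneg

lemma cdf'_le_one (x : ℝ) : cdf' P Z x ≤ 1 := by
  have h : (P {ω | Z ω ≤ x}).toReal ≤ (P Set.univ).toReal :=
    ENNReal.toReal_mono (measure_ne_top _ _) (measure_mono (Set.subset_univ _))
  simpa [cdf'] using h

lemma cdf'_eq_zero {x0 x : ℝ} (h : ∀ᵐ ω ∂P, x0 ≤ Z ω) (hx : x < x0) : cdf' P Z x = 0 := by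
  have h0 : P {ω | Z ω ≤ x} = 0 := by
    have hae : ∀ᵐ ω ∂P, ¬ (Z ω ≤ x) :=
      h.mono fun ω hω hle => absurd (hle.trans_lt hx) (not_lt.mpr hω)
    simpa [MeasureTheory.ae_iff, Classical.not_not] using hae
  simp [cdf', h0]

lemma cdf'_eq_one {b0 x : ℝ} (h : ∀ᵐ ω ∂P, Z ω ≤ b0) (hx : b0 ≤ x) : cdf' P Z x = 1 := by
  have h1 : P {ω | Z ω ≤ x} = 1 := by
    have hs : {ω | Z ω ≤ x} =ᵐ[P] (Set.univ : Set Ω) :=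
      Filter.eventuallyEq_univ.mpr (h.mono fun ω hω => hω.trans hx)
    rw [measure_congr hs, measure_univ]
  simp [cdf', h1]

lemma le_cdf'_of_forall_lt (hB : BddP P Z a b) {r x : ℝ}
    (h : ∀ y, x < y → r ≤ cdf' P Z y) : r ≤ cdf' P Z x := by
  set s : ℕ → Set Ω := fun n => {ω | Z ω ≤ x + 1 / (n + 1)} with hs
  have hanti : Antitone s := by
    intro m n hmn ω hω
    have h1 : (1 : ℝ) / (n + 1) ≤ 1 / (m + 1) := by
      apply one_div_le_one_div_of_le (by positivity)
      exact_mod_cast add_le_add_left (Nat.cast_le.mpr hmn) 1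
    simp only [hs, Set.mem_setOf_eq] at hω ⊢
    linarith
  have hint : (⋂ n, s n) = {ω | Z ω ≤ x} := by
    ext ω
    simp only [Set.mem_iInter, Set.mem_setOf_eq, hs]
    constructor
    · intro hω
      by_contra hc
      push_neg at hc
      obtain ⟨n, hn⟩ := exists_nat_one_div_lt (sub_pos.mpr hc)
      have := hω n
      linarith
    · intro hω n
      have : (0:ℝ) < 1 / (n + 1) := by positivity
      linarith
  have hmeas : ∀ n, MeasurableSet (s n) := fun n => hB.meas measurableSet_Iic
  have htend :=
    tendsto_measure_iInter_atTop (μ := P) (fun n => (hmeas n).nullMeasurableSet) hanti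
      ⟨0, measure_ne_top _ _⟩
  rw [hint] at htend
  have htend' : Tendsto (fun n : ℕ => cdf' P Z (x + 1 / (n + 1))) atTop
      (nhds (cdf' P Z x)) :=
    (ENNReal.tendsto_toReal (measure_ne_top _ _)).comp htend
  refine ge_of_tendsto htend' (Filter.Eventually.of_forall fun n => h _ ?_)
  have : (0:ℝ) < 1 / (n + 1) := by positivity
  linarith

lemma qf_set_nonempty (hB : BddP P Z a b) {r : ℝ} (hr1 : r ≤ 1) :
    {x : ℝ | r ≤ cdf' P Z x}.Nonempty :=
  ⟨b, by
    rw [Set.mem_setOf_eq, cdf'_eq_one (hB.mem.mono fun ω h => h.2) le_rfl]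
    exact hr1⟩

lemma qf_set_bddBelow (hB : BddP P Z a b) {r : ℝ} (hr0 : 0 < r) :
    BddBelow {x : ℝ | r ≤ cdf' P Z x} := by
  refine ⟨a, fun y hy => ?_⟩
  by_contra hlt
  push_neg at hlt
  rw [Set.mem_setOf_eq, cdf'_eq_zero (hB.mem.mono fun ω h => h.1) hlt] at hy
  exact absurd (hr0.trans_le hy) (lt_irrefl _)

lemma qf_le_iff (hB : BddP P Z a b) {r x : ℝ} (hr0 : 0 < r) (hr1 : r ≤ 1) :
    qf P Z r ≤ x ↔ r ≤ cdf' P Z x := by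
  constructor
  · intro h
    refine le_cdf'_of_forall_lt hB fun y hy => ?_
    obtain ⟨z, hz, hzy⟩ :=
      exists_lt_of_csInf_lt (qf_set_nonempty hB hr1) (lt_of_le_of_lt h hy)
    exact le_trans hz (cdf'_mono hzy.le)
  · intro h
    exact csInf_le (qf_set_bddBelow hB hr0) h

lemma le_qf (hB : BddP P Z a b) {x0 r : ℝ} (h : ∀ᵐ ω ∂P, x0 ≤ Z ω)
    (hr0 : 0 < r) (hr1 : r ≤ 1) : x0 ≤ qf P Z r := by
  refine le_csInf (qf_set_nonempty hB hr1) fun y hy => ?_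
  by_contra hlt
  push_neg at hlt
  have h2 : cdf' P Z y = 0 := cdf'_eq_zero h hlt
  exact absurd (hr0.trans_le (le_of_le_of_eq hy h2)) (lt_irrefl _)

lemma qf_le_b (hB : BddP P Z a b) {r : ℝ} (hr0 : 0 < r) (hr1 : r ≤ 1) : qf P Z r ≤ b :=
  (qf_le_iff hB hr0 hr1).mpr
    (by rw [cdf'_eq_one (hB.mem.mono fun ω h => h.2) le_rfl]; exact hr1)

lemma qf_mono (hB : BddP P Z a b) {r r' : ℝ} (h0 : 0 < r) (hr : r ≤ r') (h1 : r' ≤ 1) :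
    qf P Z r ≤ qf P Z r' :=
  csInf_le_csInf (qf_set_bddBelow hB h0) (qf_set_nonempty hB h1)
    (fun y hy => le_trans hr hy)

/-- Monotone modification of the quantile function. -/
def Qv (P : Measure Ω) (Z : Ω → ℝ) (a : ℝ) (r : ℝ) : ℝ := max a (qf P Z (min r 1))

lemma Qv_of_nonpos (hB : BddP P Z a b) {r : ℝ} (h : r ≤ 0) : Qv P Z a r = a := by
  have hq : qf P Z (min r 1) = 0 := by
    have hset : {x : ℝ | min r 1 ≤ cdf' P Z x} = Set.univ :=
      Set.eq_univ_of_forall fun x =>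
        le_trans (le_trans (min_le_left _ _) h) (cdf'_nonneg x)
    show sInf {x : ℝ | min r 1 ≤ cdf' P Z x} = 0
    rw [hset]
    exact Real.sInf_of_not_bddBelow not_bddBelow_univ
  rw [Qv, hq, max_eq_left hB.apos.le]

lemma Qv_eq (hB : BddP P Z a b) {r : ℝ} (hr : r ∈ Set.Ioc (0:ℝ) 1) :
    Qv P Z a r = qf P Z r := by
  rw [Qv, min_eq_left hr.2,
    max_eq_right (le_qf hB (hB.mem.mono fun ω h => h.1) hr.1 hr.2)]

lemma Qv_mem (hB : BddP P Z a b) (r : ℝ) : Qv P Z a r ∈ Set.Icc a b := by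
  rcases le_or_gt r 0 with h | h
  · rw [Qv_of_nonpos hB h]; exact ⟨le_rfl, hB.ab⟩
  · have h1 : min r 1 ∈ Set.Ioc (0:ℝ) 1 := ⟨lt_min h one_pos, min_le_right _ _⟩
    constructor
    · exact le_max_left _ _
    · exact max_le hB.ab (qf_le_b hB h1.1 h1.2)

lemma Qv_mono (hB : BddP P Z a b) : Monotone (Qv P Z a) := by
  intro r r' hrr'
  rcases le_or_gt r 0 with h | h
  · rw [Qv_of_nonpos hB h]
    exact (Qv_mem hB r').1
  · have hr' : 0 < r' := h.trans_le hrr'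
    exact max_le_max le_rfl
      (qf_mono hB (lt_min h one_pos) (min_le_min hrr' le_rfl) (min_le_right _ _))

lemma Qv_measurable (hB : BddP P Z a b) : Measurable (Qv P Z a) :=
  (Qv_mono hB).measurable

end Aux

section Aux2

variable {P : Measure Ω} [IsProbabilityMeasure P] {Z : Ω → ℝ} {a b : ℝ}

lemma map_Qv (hB : BddP P Z a b) :
    Measure.map (Qv P Z a) (volume.restrict (Set.Ioo 0 1)) = Measure.map Z P := by
  refine MeasureTheory.Measure.ext_of_Iic _ _ fun x => ?_
  rw [Measure.map_apply (Qv_measurable hB) measurableSet_Iic,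
    Measure.map_apply hB.meas measurableSet_Iic,
    Measure.restrict_apply ((Qv_measurable hB) measurableSet_Iic)]
  have hzx : Z ⁻¹' Set.Iic x = {ω | Z ω ≤ x} := rfl
  have hset : Qv P Z a ⁻¹' Set.Iic x ∩ Set.Ioo 0 1
      = Set.Ioc 0 (cdf' P Z x) ∩ Set.Ioo 0 1 := by
    ext r
    simp only [Set.mem_inter_iff, Set.mem_preimage, Set.mem_Iic, Set.mem_Ioo, Set.mem_Ioc]
    constructor
    · rintro ⟨hq, hr0, hr1⟩
      rw [Qv_eq hB ⟨hr0, hr1.le⟩] at hq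
      exact ⟨⟨hr0, (qf_le_iff hB hr0 hr1.le).mp hq⟩, hr0, hr1⟩
    · rintro ⟨⟨hr0, hrF⟩, _, hr1⟩
      refine ⟨?_, hr0, hr1⟩
      rw [Qv_eq hB ⟨hr0, hr1.le⟩]
      exact (qf_le_iff hB hr0 hr1.le).mpr hrF
  rw [hset, hzx]
  have hF0 : 0 ≤ cdf' P Z x := cdf'_nonneg x
  have hF1 : cdf' P Z x ≤ 1 := cdf'_le_one x
  have hPofReal : P {ω | Z ω ≤ x} = ENNReal.ofReal (cdf' P Z x) :=
    (ENNReal.ofReal_toReal (measure_ne_top _ _)).symm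
  rcases lt_or_ge (cdf' P Z x) 1 with h | h
  · have : Set.Ioc 0 (cdf' P Z x) ∩ Set.Ioo 0 1 = Set.Ioc 0 (cdf' P Z x) :=
      Set.inter_eq_left.mpr fun r hr => ⟨hr.1, lt_of_le_of_lt hr.2 h⟩
    rw [this, hPofReal, Real.volume_Ioc, sub_zero]
  · have hF : cdf' P Z x = 1 := le_antisymm hF1 h
    have : Set.Ioc 0 (cdf' P Z x) ∩ Set.Ioo 0 1 = Set.Ioo 0 1 :=
      Set.inter_eq_right.mpr fun r hr => ⟨hr.1, by rw [hF]; exact hr.2.le⟩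
    rw [this, hPofReal, hF, Real.volume_Ioo, sub_zero]

lemma integral_comp_Qv (hB : BddP P Z a b) {g : ℝ → ℝ} (hg : Continuous g) :
    ∫ ω, g (Z ω) ∂P = ∫ r in Set.Ioo (0:ℝ) 1, g (Qv P Z a r) := by
  rw [← integral_map hB.meas.aemeasurable hg.aestronglyMeasurable, ← map_Qv hB,
    integral_map (Qv_measurable hB).aemeasurable hg.aestronglyMeasurable]

lemma integrable_comp_Qv (hB : BddP P Z a b) {g : ℝ → ℝ} (hg : Continuous g) {t : ℝ} :
    IntegrableOn (fun r => g (Qv P Z a r)) (Set.Ioo 0 t) volume := by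
  obtain ⟨M, hM⟩ := isCompact_Icc.exists_bound_of_continuousOn
    (hg.continuousOn : ContinuousOn g (Set.Icc a b))
  exact Integrable.mono' (integrable_const M)
    ((hg.measurable.comp (Qv_measurable hB)).aestronglyMeasurable)
    (Filter.Eventually.of_forall fun r => hM _ (Qv_mem hB r))

lemma integrable_comp_Z (hB : BddP P Z a b) {g : ℝ → ℝ} (hg : Continuous g) :
    Integrable (fun ω => g (Z ω)) P := by
  obtain ⟨M, hM⟩ := isCompact_Icc.exists_bound_of_continuousOn
    (hg.continuousOn : ContinuousOn g (Set.Icc a b))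
  exact Integrable.mono' (integrable_const M)
    ((hg.measurable.comp hB.meas).aestronglyMeasurable)
    (hB.mem.mono fun ω hω => hM _ hω)

lemma QvIntegrableOn (hB : BddP P Z a b) {t : ℝ} :
    IntegrableOn (Qv P Z a) (Set.Ioo 0 t) volume :=
  integrable_comp_Qv hB continuous_id

end Aux2

section Aux3

variable {P : Measure Ω} [IsProbabilityMeasure P] {Z W : Ω → ℝ} {a b : ℝ}

/-- Integral of the (monotonized) quantile function over `(0, t)`. -/
def Av (P : Measure Ω) (Z : Ω → ℝ) (a t : ℝ) : ℝ := ∫ r in Set.Ioo (0:ℝ) t, Qv P Z a r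

/-- Expected put payoff `E[(k - Z)^+]`. -/
def piv (P : Measure Ω) (Z : Ω → ℝ) (k : ℝ) : ℝ := ∫ ω, max (k - Z ω) 0 ∂P

lemma piv_nonneg (k : ℝ) : 0 ≤ piv P Z k :=
  integral_nonneg fun ω => le_max_right _ _

lemma contMax (k : ℝ) : Continuous fun z : ℝ => max (k - z) 0 :=
  (continuous_const.sub continuous_id).max continuous_const

lemma piv_eq (hB : BddP P Z a b) (k : ℝ) :
    piv P Z k = ∫ r in Set.Ioo (0:ℝ) 1, max (k - Qv P Z a r) 0 :=
  integral_comp_Qv hB (contMax k)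

lemma piv_integrable (hB : BddP P Z a b) (k : ℝ) :
    Integrable (fun ω => max (k - Z ω) 0) P :=
  integrable_comp_Z hB (contMax k)

lemma Av_const_sub (hB : BddP P Z a b) {t : ℝ} (ht : 0 ≤ t) (k : ℝ) :
    ∫ r in Set.Ioo (0:ℝ) t, (k - Qv P Z a r) = k * t - Av P Z a t := by
  rw [integral_sub (integrableOn_const (μ := volume) (s := Set.Ioo (0:ℝ) t) (C := k)
      (by simp [Real.volume_Ioo]))
    (QvIntegrableOn hB)]
  rw [setIntegral_const, Real.volume_real_Ioo, sub_zero, smul_eq_mul,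
    max_eq_left ht, mul_comm]
  rfl

lemma D_ineq (hB : BddP P Z a b) {t : ℝ} (ht : t ∈ Set.Ioc (0:ℝ) 1) (k : ℝ) :
    k * t - Av P Z a t ≤ piv P Z k := by
  rw [piv_eq hB, ← Av_const_sub hB ht.1.le]
  calc ∫ r in Set.Ioo (0:ℝ) t, (k - Qv P Z a r)
      ≤ ∫ r in Set.Ioo (0:ℝ) t, max (k - Qv P Z a r) 0 := by
        refine setIntegral_mono ?_ ?_ fun r => le_max_left _ _
        · exact (integrableOn_const (by simp [Real.volume_Ioo])).sub (QvIntegrableOn hB)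
        · exact integrable_comp_Qv hB (contMax k)
    _ ≤ ∫ r in Set.Ioo (0:ℝ) 1, max (k - Qv P Z a r) 0 := by
        refine setIntegral_mono_set (integrable_comp_Qv hB (contMax k))
          (Filter.Eventually.of_forall fun r => le_max_right _ _) ?_
        exact Filter.Eventually.of_forall
          (Set.Ioo_subset_Ioo le_rfl ht.2 : Set.Ioo (0:ℝ) t ⊆ Set.Ioo 0 1)

lemma D_eq (hB : BddP P Z a b) {t : ℝ} (ht : t ∈ Set.Ioc (0:ℝ) 1) :
    piv P Z (Qv P Z a t) = Qv P Z a t * t - Av P Z a t := by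
  rw [piv_eq hB]
  have hsplit : (Set.Ioo (0:ℝ) 1) = Set.Ioo 0 t ∪ Set.Ico t 1 :=
    (Set.Ioo_union_Ico_eq_Ioo ht.1 ht.2).symm
  have hdisj : Disjoint (Set.Ioo (0:ℝ) t) (Set.Ico t 1) := by
    rw [Set.disjoint_left]
    rintro r ⟨_, hr2⟩ ⟨hr3, _⟩
    exact absurd hr3 (not_le.mpr hr2)
  rw [hsplit, setIntegral_union hdisj measurableSet_Ico
    (integrable_comp_Qv hB (contMax _))
    ((integrable_comp_Qv hB (contMax _)).mono_set
      (by intro r hr; exact ⟨lt_of_lt_of_le ht.1 hr.1, hr.2⟩))]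
  have e1 : ∫ r in Set.Ioo (0:ℝ) t, max (Qv P Z a t - Qv P Z a r) 0
      = ∫ r in Set.Ioo (0:ℝ) t, (Qv P Z a t - Qv P Z a r) :=
    setIntegral_congr_fun measurableSet_Ioo fun r hr =>
      max_eq_left (sub_nonneg.mpr (Qv_mono hB hr.2.le))
  have e2 : ∫ r in Set.Ico t 1, max (Qv P Z a t - Qv P Z a r) 0 = 0 := by
    rw [setIntegral_congr_fun measurableSet_Ico
      (fun r hr => max_eq_right (sub_nonpos.mpr (Qv_mono hB hr.1)))]
    simp
  rw [e1, e2, Av_const_sub hB ht.1.le, add_zero]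

/-- A "lower" subset of `(0,1)` is a.e. an interval `(0, e)`. -/
lemma lower_ae {S : Set ℝ} (hS : S ⊆ Set.Ioo 0 1)
    (hlow : ∀ ⦃r⦄, r ∈ S → ∀ ⦃r'⦄, 0 < r' → r' < r → r' ∈ S) :
    ∃ e ∈ Set.Icc (0:ℝ) 1, S =ᵐ[volume] Set.Ioo 0 e := by
  rcases S.eq_empty_or_nonempty with hemp | hne
  · exact ⟨0, ⟨le_rfl, zero_le_one⟩, by rw [hemp, Set.Ioo_self]; exact Filter.EventuallyEq.rfl⟩
  · set e := sSup S with he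
    have hbdd : BddAbove S := ⟨1, fun r hr => (hS hr).2.le⟩
    have he0 : 0 ≤ e := by
      obtain ⟨r, hr⟩ := hne
      exact (hS hr).1.le.trans (le_csSup hbdd hr)
    have he1 : e ≤ 1 := csSup_le hne fun r hr => (hS hr).2.le
    refine ⟨e, ⟨he0, he1⟩, ?_⟩
    have hsub1 : Set.Ioo 0 e ⊆ S := by
      rintro r ⟨hr0, hre⟩
      obtain ⟨s', hs', hrs'⟩ := exists_lt_of_lt_csSup hne hre
      exact hlow hs' hr0 hrs'
    have hsub2 : S ⊆ Set.Ioo 0 e ∪ {e} := by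
      intro r hr
      rcases lt_or_eq_of_le (le_csSup hbdd hr) with h | h
      · exact Or.inl ⟨(hS hr).1, h⟩
      · exact Or.inr h
    have hae : ∀ᵐ x : ℝ, x ≠ e := by
      rw [MeasureTheory.ae_iff]
      have : {x : ℝ | ¬ x ≠ e} = {e} := by ext x; simp
      rw [this]
      exact Real.volume_singleton
    rw [Filter.eventuallyEq_set]
    filter_upwards [hae] with x hx
    constructor
    · intro hxS
      rcases hsub2 hxS with h | h
      · exact h
      · exact absurd h hx
    · exact fun hxI => hsub1 hxI

lemma A_le_of_pi_le (hBZ : BddP P Z a b) (hBW : BddP P W a b)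
    (hpi : ∀ k, piv P W k ≤ piv P Z k) {t : ℝ} (ht : t ∈ Set.Ioc (0:ℝ) 1) :
    Av P Z a t ≤ Av P W a t := by
  have h1 : Av P Z a t = Qv P Z a t * t - piv P Z (Qv P Z a t) := by
    rw [D_eq hBZ ht]; ring
  have h2 := D_ineq hBW ht (Qv P Z a t)
  have h3 := hpi (Qv P Z a t)
  linarith

lemma pi_le_of_A_le (hBZ : BddP P Z a b) (hBW : BddP P W a b)
    (hA : ∀ t ∈ Set.Ioc (0:ℝ) 1, Av P Z a t ≤ Av P W a t) (k : ℝ) :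
    piv P W k ≤ piv P Z k := by
  set S : Set ℝ := {r ∈ Set.Ioo (0:ℝ) 1 | Qv P W a r < k} with hs
  have hSsub : S ⊆ Set.Ioo 0 1 := fun r hr => hr.1
  have hSlow : ∀ ⦃r⦄, r ∈ S → ∀ ⦃r'⦄, 0 < r' → r' < r → r' ∈ S := by
    rintro r ⟨hr1, hr2⟩ r' h0 hlt
    exact ⟨⟨h0, hlt.trans hr1.2⟩, lt_of_le_of_lt (Qv_mono hBW hlt.le) hr2⟩
  obtain ⟨e, heI, heae⟩ := lower_ae hSsub hSlow
  have hSmeas : MeasurableSet S := by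
    have : S = Set.Ioo (0:ℝ) 1 ∩ {r | Qv P W a r < k} := by
      ext r; simp [hs, Set.mem_sep_iff, and_comm]
    rw [this]
    exact measurableSet_Ioo.inter ((Qv_measurable hBW) measurableSet_Iio)
  have step1 : piv P W k = ∫ r in S, (k - Qv P W a r) := by
    rw [piv_eq hBW]
    have : ∀ r ∈ Set.Ioo (0:ℝ) 1, max (k - Qv P W a r) 0
        = S.indicator (fun r => k - Qv P W a r) r := by
      intro r hr
      by_cases hrk : Qv P W a r < k
      · have hmem : r ∈ S := ⟨hr, hrk⟩
        rw [Set.indicator_of_mem hmem]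
        exact max_eq_left (by linarith)
      · have hmem : r ∉ S := fun hrS => hrk hrS.2
        rw [Set.indicator_of_notMem hmem]
        exact max_eq_right (by push_neg at hrk; linarith)
    rw [setIntegral_congr_fun measurableSet_Ioo this, setIntegral_indicator hSmeas,
      Set.inter_eq_right.mpr hSsub]
  have step2 : piv P W k = k * e - Av P W a e := by
    rw [step1, setIntegral_congr_set heae, Av_const_sub hBW heI.1]
  rcases eq_or_lt_of_le heI.1 with he0 | he0
  · rw [step2, ← he0]
    simp only [mul_zero, zero_sub]
    have : Av P W a 0 = 0 := by rw [Av, Set.Ioo_self, Measure.restrict_empty, integral_zero_measure]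
    rw [this, neg_zero]
    exact piv_nonneg k
  · have heIoc : e ∈ Set.Ioc (0:ℝ) 1 := ⟨he0, heI.2⟩
    calc piv P W k = k * e - Av P W a e := step2
      _ ≤ k * e - Av P Z a e := by have := hA e heIoc; linarith
      _ ≤ piv P Z k := D_ineq hBZ heIoc k

end Aux3

section Aux4

variable {P : Measure Ω} [IsProbabilityMeasure P] {Z W : Ω → ℝ} {a b : ℝ}

lemma concave_grad {a₀ : ℝ} {φ φ' : ℝ → ℝ}
    (hd : ∀ z ∈ Set.Ioi a₀, HasDerivAt φ (φ' z) z)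
    (hanti : AntitoneOn φ' (Set.Ioi a₀))
    (hφ'cont : ContinuousOn φ' (Set.Ioi a₀))
    {y z : ℝ} (hy : a₀ < y) (hz : a₀ < z) :
    φ z - φ y ≤ φ' y * (z - y) := by
  have husub : Set.uIcc y z ⊆ Set.Ioi a₀ := by
    intro x hx
    have := hx.1
    rcases le_total y z with h | h
    · rw [Set.uIcc_of_le h] at hx; exact lt_of_lt_of_le hy hx.1
    · rw [Set.uIcc_of_ge h] at hx; exact lt_of_lt_of_le hz hx.1
  have hii : IntervalIntegrable φ' volume y z :=
    (hφ'cont.mono husub).intervalIntegrable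
  have hftc : ∫ x in y..z, φ' x = φ z - φ y :=
    intervalIntegral.integral_eq_sub_of_hasDerivAt (fun x hx => hd x (husub hx)) hii
  rcases le_total y z with h | h
  · have hmono : ∫ x in y..z, φ' x ≤ ∫ x in y..z, φ' y := by
      refine intervalIntegral.integral_mono_on h hii intervalIntegrable_const fun x hx => ?_
      exact hanti (Set.mem_Ioi.mpr hy) (husub (by rw [Set.uIcc_of_le h]; exact hx)) hx.1
    rw [hftc] at hmono
    simpa [intervalIntegral.integral_const, smul_eq_mul, mul_comm] using hmono
  · have hii' : IntervalIntegrable φ' volume z y := hii.symm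
    have hftc' : ∫ x in z..y, φ' x = φ y - φ z := by
      rw [intervalIntegral.integral_symm] at hftc
      linarith [hftc]
    have hmono : ∫ x in z..y, φ' y ≤ ∫ x in z..y, φ' x := by
      refine intervalIntegral.integral_mono_on h intervalIntegrable_const hii' fun x hx => ?_
      refine hanti (husub (by rw [Set.uIcc_of_ge h]; exact hx)) (Set.mem_Ioi.mpr hy) hx.2
    rw [hftc'] at hmono
    rw [intervalIntegral.integral_const, smul_eq_mul] at hmono
    nlinarith

lemma integral_comp_le (hBZ : BddP P Z a b) (hBW : BddP P W a b)
    (hA : ∀ t ∈ Set.Ioc (0:ℝ) 1, Av P Z a t ≤ Av P W a t)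
    {a₀ : ℝ} (ha₀ : a₀ < a) {φ φ' : ℝ → ℝ} (hφc : Continuous φ)
    (hd : ∀ z ∈ Set.Ioi a₀, HasDerivAt φ (φ' z) z)
    (hpos : ∀ z ∈ Set.Ioi a₀, 0 ≤ φ' z)
    (hanti : AntitoneOn φ' (Set.Ioi a₀))
    (hφ'cont : ContinuousOn φ' (Set.Ioi a₀)) :
    ∫ ω, φ (Z ω) ∂P ≤ ∫ ω, φ (W ω) ∂P := by
  have hba : 0 ≤ b - a := sub_nonneg.mpr hBZ.ab
  set QZ := Qv P Z a with hQZdef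
  set QW := Qv P W a with hQWdef
  set h : ℝ → ℝ := fun r => φ' (QW r) with hhdef
  set δ : ℝ → ℝ := fun r => QW r - QZ r with hδdef
  have hQZm : ∀ r, QZ r ∈ Set.Icc a b := Qv_mem hBZ
  have hQWm : ∀ r, QW r ∈ Set.Icc a b := Qv_mem hBW
  have hQZ' : ∀ r, QZ r ∈ Set.Ioi a₀ := fun r => ha₀.trans_le (hQZm r).1
  have hQW' : ∀ r, QW r ∈ Set.Ioi a₀ := fun r => ha₀.trans_le (hQWm r).1
  have hhanti : Antitone h := fun r r' hrr' =>
    hanti (hQW' r) (hQW' r') (Qv_mono hBW hrr')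
  have hhmeas : Measurable h := hhanti.measurable
  have hhnn : ∀ r, 0 ≤ h r := fun r => hpos _ (hQW' r)
  have hδmeas : Measurable δ := (Qv_measurable hBW).sub (Qv_measurable hBZ)
  have hδbd : ∀ r, |δ r| ≤ b - a := fun r =>
    abs_le.mpr ⟨by have := (hQZm r).2; have := (hQWm r).1; simp only [hδdef]; linarith,
      by have := (hQZm r).1; have := (hQWm r).2; simp only [hδdef]; linarith⟩
  have hδint : IntegrableOn δ (Set.Ioo (0:ℝ) 1) volume :=
    (QvIntegrableOn hBW).sub (QvIntegrableOn hBZ)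
  have key : 0 ≤ ∫ r in Set.Ioo (0:ℝ) 1, h r * δ r := by
    set M := φ' a with hMdef
    have haIoi : a ∈ Set.Ioi a₀ := ha₀
    have hhM : ∀ r, h r ≤ M := fun r => hanti haIoi (hQW' r) (hQWm r).1
    rcases le_or_gt M 0 with hM | hM
    · have hz : ∀ r, h r = 0 := fun r => le_antisymm ((hhM r).trans hM) (hhnn r)
      have : (fun r => h r * δ r) = fun _ => (0:ℝ) := by
        funext r; rw [hz r, zero_mul]
      rw [this]
      simp
    · set f : ℝ × ℝ → ℝ := fun q => if q.2 < h q.1 then δ q.1 else 0 with hfdef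
      have hfmeas : Measurable f := by
        refine Measurable.ite ?_ (hδmeas.comp measurable_fst) measurable_const
        exact measurableSet_lt measurable_snd (hhmeas.comp measurable_fst)
      have hfint : Integrable f
          ((volume.restrict (Set.Ioo (0:ℝ) 1)).prod (volume.restrict (Set.Ioo (0:ℝ) M))) := by
        refine Integrable.mono' (integrable_const (b - a)) hfmeas.aestronglyMeasurable
          (Filter.Eventually.of_forall fun q => ?_)
        by_cases hq : q.2 < h q.1
        · simp only [hfdef, if_pos hq, Real.norm_eq_abs]; exact hδbd q.1
        · simp only [hfdef, if_neg hq, Real.norm_eq_abs, abs_zero]; exact hba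
      have hinner : ∀ r ∈ Set.Ioo (0:ℝ) 1,
          h r * δ r = ∫ u in Set.Ioo (0:ℝ) M, f (r, u) := by
        intro r _
        have hfr : ∀ u, f (r, u) = Set.indicator (Set.Iio (h r)) (fun _ => δ r) u := by
          intro u
          by_cases hu : u < h r
          · rw [Set.indicator_of_mem (Set.mem_Iio.mpr hu)]
            simp only [hfdef, if_pos hu]
          · rw [Set.indicator_of_notMem (fun hmem => hu (Set.mem_Iio.mp hmem))]
            simp only [hfdef, if_neg hu]
        rw [setIntegral_congr_fun measurableSet_Ioo (fun u _ => hfr u),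
          setIntegral_indicator measurableSet_Iio]
        have hset : Set.Ioo (0:ℝ) M ∩ Set.Iio (h r) = Set.Ioo 0 (h r) := by
          ext u
          simp only [Set.mem_inter_iff, Set.mem_Ioo, Set.mem_Iio]
          exact ⟨fun hu => ⟨hu.1.1, hu.2⟩, fun hu => ⟨⟨hu.1, lt_of_lt_of_le hu.2 (hhM r)⟩, hu.2⟩⟩
        rw [hset, setIntegral_const, Real.volume_real_Ioo, sub_zero,
          max_eq_left (hhnn r), smul_eq_mul]
      have hswap : ∫ r in Set.Ioo (0:ℝ) 1, ∫ u in Set.Ioo (0:ℝ) M, f (r, u)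
          = ∫ u in Set.Ioo (0:ℝ) M, ∫ r in Set.Ioo (0:ℝ) 1, f (r, u) :=
        integral_integral_swap hfint
      rw [setIntegral_congr_fun measurableSet_Ioo hinner, hswap]
      refine setIntegral_nonneg measurableSet_Ioo fun u hu => ?_
      set Su := {r ∈ Set.Ioo (0:ℝ) 1 | u < h r} with hSudef
      have hSsub : Su ⊆ Set.Ioo 0 1 := fun r hr => hr.1
      have hSlow : ∀ ⦃r⦄, r ∈ Su → ∀ ⦃r'⦄, 0 < r' → r' < r → r' ∈ Su := by
        rintro r ⟨hr1, hr2⟩ r' h0 hlt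
        exact ⟨⟨h0, hlt.trans hr1.2⟩, lt_of_lt_of_le hr2 (hhanti hlt.le)⟩
      obtain ⟨e, heI, heae⟩ := lower_ae hSsub hSlow
      have hSmeas : MeasurableSet Su := by
        have : Su = Set.Ioo (0:ℝ) 1 ∩ {r | u < h r} := by
          ext r; simp [hSudef, Set.mem_sep_iff]
        rw [this]
        exact measurableSet_Ioo.inter (measurableSet_lt measurable_const hhmeas)
      have hindc : ∫ r in Set.Ioo (0:ℝ) 1, f (r, u) = ∫ r in Su, δ r := by
        have : ∀ r ∈ Set.Ioo (0:ℝ) 1, f (r, u) = Su.indicator δ r := by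
          intro r hr
          by_cases hru : u < h r
          · have hmem : r ∈ Su := ⟨hr, hru⟩
            rw [Set.indicator_of_mem hmem]
            simp only [hfdef, if_pos hru]
          · have hmem : r ∉ Su := fun hrS => hru hrS.2
            rw [Set.indicator_of_notMem hmem]
            simp only [hfdef, if_neg hru]
        rw [setIntegral_congr_fun measurableSet_Ioo this, setIntegral_indicator hSmeas,
          Set.inter_eq_right.mpr hSsub]
      rw [hindc, setIntegral_congr_set heae]
      have hsplit : ∫ r in Set.Ioo (0:ℝ) e, δ r = Av P W a e - Av P Z a e :=
        integral_sub (QvIntegrableOn hBW) (QvIntegrableOn hBZ)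
      rw [hsplit]
      rcases eq_or_lt_of_le heI.1 with he0 | he0
      · rw [Av, Av, ← he0, Set.Ioo_self, Measure.restrict_empty]
        simp
      · exact sub_nonneg.mpr (hA e ⟨he0, heI.2⟩)
  have hcomp : ∀ r, φ (QZ r) - φ (QW r) ≤ -(h r * δ r) := by
    intro r
    have hg := concave_grad hd hanti hφ'cont (hQW' r) (hQZ' r)
    have : φ' (QW r) * (QZ r - QW r) = -(h r * δ r) := by
      simp only [hhdef, hδdef]; ring
    linarith
  rw [integral_comp_Qv hBZ hφc, integral_comp_Qv hBW hφc]
  have hint1 : IntegrableOn (fun r => φ (QZ r)) (Set.Ioo (0:ℝ) 1) volume :=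
    integrable_comp_Qv hBZ hφc
  have hint2 : IntegrableOn (fun r => φ (QW r)) (Set.Ioo (0:ℝ) 1) volume :=
    integrable_comp_Qv hBW hφc
  have hhδint : IntegrableOn (fun r => h r * δ r) (Set.Ioo (0:ℝ) 1) volume := by
    have hM0 : ∀ r, |h r * δ r| ≤ |φ' a| * (b - a) := by
      intro r
      rw [abs_mul]
      refine mul_le_mul ?_ (hδbd r) (abs_nonneg _) (abs_nonneg _)
      rw [abs_of_nonneg (hhnn r), abs_of_nonneg (hhnn 0 |>.trans ?_)]
      · exact hanti (show a ∈ Set.Ioi a₀ from ha₀) (hQW' r) (hQWm r).1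
      · exact hanti (show a ∈ Set.Ioi a₀ from ha₀) (hQW' 0) (hQWm 0).1
    refine Integrable.mono' (integrable_const (|φ' a| * (b - a)))
      ((hhmeas.mul hδmeas).aestronglyMeasurable)
      (Filter.Eventually.of_forall fun r => hM0 r)
  have hsub : ∫ r in Set.Ioo (0:ℝ) 1, (φ (QZ r) - φ (QW r))
      = (∫ r in Set.Ioo (0:ℝ) 1, φ (QZ r)) - ∫ r in Set.Ioo (0:ℝ) 1, φ (QW r) :=
    integral_sub hint1 hint2
  have hle : ∫ r in Set.Ioo (0:ℝ) 1, (φ (QZ r) - φ (QW r))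
      ≤ ∫ r in Set.Ioo (0:ℝ) 1, -(h r * δ r) :=
    setIntegral_mono (hint1.sub hint2) hhδint.neg hcomp
  have hneg : ∫ r in Set.Ioo (0:ℝ) 1, -(h r * δ r)
      = -∫ r in Set.Ioo (0:ℝ) 1, h r * δ r := integral_neg _
  rw [hneg] at hle
  linarith

end Aux4

section Aux5

lemma hasDerivAt_expc (c x : ℝ) :
    HasDerivAt (fun x => Real.exp (c * x)) (c * Real.exp (c * x)) x := by
  have h1 : HasDerivAt (fun x : ℝ => c * x) c x := by
    simpa using (hasDerivAt_id x).const_mul c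
  have h2 := (Real.hasDerivAt_exp (c * x)).comp x h1
  rw [mul_comm c (Real.exp _)]
  exact h2

lemma deriv_expc (c : ℝ) :
    deriv (fun x => Real.exp (c * x)) = fun x => c * Real.exp (c * x) :=
  funext fun x => (hasDerivAt_expc c x).deriv

lemma RA_expc {c : ℝ} (hc : c ≠ 0) (x : ℝ) : RA (fun x => Real.exp (c * x)) x = -c := by
  rw [RA, deriv_expc]
  have h2 : deriv (fun x => c * Real.exp (c * x)) x = c * (c * Real.exp (c * x)) :=
    ((hasDerivAt_expc c x).const_mul c).deriv
  rw [h2]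
  have he := Real.exp_ne_zero (c * x)
  field_simp

lemma upp_le {u : ℝ → ℝ} {c x : ℝ} (hu3 : 0 < deriv u x) (hRA : -c ≤ RA u x) :
    deriv (deriv u) x ≤ c * deriv u x := by
  rw [RA, le_div_iff₀ hu3] at hRA
  linarith

/-- Auxiliary smooth approximation of `x ↦ min (exp (c x)) k`. -/
def wf (c ε k : ℝ) (x : ℝ) : ℝ := (k - Real.exp (c * x)) / ε

def phiMin (ε k : ℝ) (z : ℝ) : ℝ := k - ε * Real.log (1 + Real.exp ((k - z) / ε))

def Umin (c ε k : ℝ) (x : ℝ) : ℝ := k - ε * Real.log (1 + Real.exp (wf c ε k x))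

lemma Umin_eq_phiMin (c ε k x : ℝ) : Umin c ε k x = phiMin ε k (Real.exp (c * x)) := rfl

def sig (c ε k : ℝ) (x : ℝ) : ℝ :=
  Real.exp (wf c ε k x) / (1 + Real.exp (wf c ε k x))

def DU (c ε k : ℝ) (x : ℝ) : ℝ := c * Real.exp (c * x) * sig c ε k x

def DDU (c ε k : ℝ) (x : ℝ) : ℝ :=
  c * (c * Real.exp (c * x)) * sig c ε k x
    + c * Real.exp (c * x) *
      (Real.exp (wf c ε k x) * (-(c * Real.exp (c * x)) / ε) / (1 + Real.exp (wf c ε k x))^2)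

lemma one_add_exp_pos (t : ℝ) : 0 < 1 + Real.exp t := by positivity

lemma hasDerivAt_wf (c k x : ℝ) {ε : ℝ} (hε : ε ≠ 0) :
    HasDerivAt (wf c ε k) (-(c * Real.exp (c * x)) / ε) x := by
  have h1 : HasDerivAt (fun x => k - Real.exp (c * x)) (-(c * Real.exp (c * x))) x :=
    (hasDerivAt_expc c x).const_sub k
  exact h1.div_const ε

lemma hasDerivAt_sig (c k x : ℝ) {ε : ℝ} (hε : ε ≠ 0) :
    HasDerivAt (sig c ε k)
      (Real.exp (wf c ε k x) * (-(c * Real.exp (c * x)) / ε)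
        / (1 + Real.exp (wf c ε k x))^2) x := by
  have hE : HasDerivAt (fun x => Real.exp (wf c ε k x))
      (Real.exp (wf c ε k x) * (-(c * Real.exp (c * x)) / ε)) x :=
    (Real.hasDerivAt_exp _).comp x (hasDerivAt_wf c k x hε)
  have hD : HasDerivAt (fun x => 1 + Real.exp (wf c ε k x))
      (Real.exp (wf c ε k x) * (-(c * Real.exp (c * x)) / ε)) x :=
    hE.const_add 1
  have hne : (1 + Real.exp (wf c ε k x)) ≠ 0 := (one_add_exp_pos _).ne'
  have := hE.div hD hne
  convert this using 1
  · rfl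
  · rfl
  · rfl
  · ring

lemma hasDerivAt_Umin (c k x : ℝ) {ε : ℝ} (hε : 0 < ε) :
    HasDerivAt (Umin c ε k) (DU c ε k x) x := by
  have hE : HasDerivAt (fun x => Real.exp (wf c ε k x))
      (Real.exp (wf c ε k x) * (-(c * Real.exp (c * x)) / ε)) x :=
    (Real.hasDerivAt_exp _).comp x (hasDerivAt_wf c k x hε.ne')
  have hD : HasDerivAt (fun x => 1 + Real.exp (wf c ε k x))
      (Real.exp (wf c ε k x) * (-(c * Real.exp (c * x)) / ε)) x :=
    hE.const_add 1
  have hne : (1 + Real.exp (wf c ε k x)) ≠ 0 := (one_add_exp_pos _).ne'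
  have hL : HasDerivAt (fun x => Real.log (1 + Real.exp (wf c ε k x)))
      ((Real.exp (wf c ε k x) * (-(c * Real.exp (c * x)) / ε))
        / (1 + Real.exp (wf c ε k x))) x := hD.log hne
  have hU : HasDerivAt (Umin c ε k)
      (-(ε * ((Real.exp (wf c ε k x) * (-(c * Real.exp (c * x)) / ε))
        / (1 + Real.exp (wf c ε k x))))) x := (hL.const_mul ε).const_sub k
  convert hU using 1
  rw [DU, sig]
  field_simp

lemma deriv_Umin (c k : ℝ) {ε : ℝ} (hε : 0 < ε) :
    deriv (Umin c ε k) = DU c ε k :=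
  funext fun x => (hasDerivAt_Umin c k x hε).deriv

lemma hasDerivAt_DU (c k x : ℝ) {ε : ℝ} (hε : 0 < ε) :
    HasDerivAt (DU c ε k) (DDU c ε k x) x := by
  have h1 : HasDerivAt (fun x => c * Real.exp (c * x)) (c * (c * Real.exp (c * x))) x :=
    (hasDerivAt_expc c x).const_mul c
  exact h1.mul (hasDerivAt_sig c k x hε.ne')

lemma sig_pos (c ε k x : ℝ) : 0 < sig c ε k x :=
  div_pos (Real.exp_pos _) (one_add_exp_pos _)

lemma sig_lt_one (c ε k x : ℝ) : sig c ε k x < 1 := by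
  rw [sig, div_lt_one (one_add_exp_pos _)]
  linarith [Real.exp_pos (wf c ε k x)]

lemma DU_pos {c : ℝ} (hc : 0 < c) (ε k x : ℝ) : 0 < DU c ε k x :=
  mul_pos (mul_pos hc (Real.exp_pos _)) (sig_pos c ε k x)

lemma DDU_le {c ε : ℝ} (hc : 0 < c) (hε : 0 < ε) (k x : ℝ) :
    DDU c ε k x ≤ c * DU c ε k x := by
  have h1 : c * DU c ε k x = c * (c * Real.exp (c * x)) * sig c ε k x := by
    rw [DU]; ring
  rw [DDU, h1]
  have h2 : Real.exp (wf c ε k x) * (-(c * Real.exp (c * x)) / ε)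
      / (1 + Real.exp (wf c ε k x))^2 ≤ 0 := by
    apply div_nonpos_of_nonpos_of_nonneg
    · apply mul_nonpos_of_nonneg_of_nonpos (Real.exp_pos _).le
      apply div_nonpos_of_nonpos_of_nonneg _ hε.le
      have := mul_pos hc (Real.exp_pos (c * x))
      linarith
    · positivity
  have h3 : 0 < c * Real.exp (c * x) := mul_pos hc (Real.exp_pos _)
  nlinarith

lemma Umin_isUtility {c ε : ℝ} (hc : 0 < c) (hε : 0 < ε) (k : ℝ) :
    IsUtility Set.univ (Umin c ε k) := by
  refine ⟨fun x _ => (hasDerivAt_Umin c k x hε).differentiableAt, fun x _ => ?_, fun x _ => ?_⟩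
  · rw [deriv_Umin c k hε]
    exact (hasDerivAt_DU c k x hε).differentiableAt
  · rw [deriv_Umin c k hε]
    exact DU_pos hc ε k x

lemma Umin_RA {c ε : ℝ} (hc : 0 < c) (hε : 0 < ε) (k x : ℝ) :
    RA (fun x => Real.exp (c * x)) x ≤ RA (Umin c ε k) x := by
  rw [RA_expc hc.ne', RA, deriv_Umin c k hε]
  have hd : deriv (DU c ε k) x = DDU c ε k x := (hasDerivAt_DU c k x hε).deriv
  rw [hd, le_div_iff₀ (DU_pos hc ε k x)]
  have := DDU_le hc hε k x
  linarith

lemma Umin_bounds {c ε : ℝ} (hε : 0 < ε) (k x : ℝ) :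
    min (Real.exp (c * x)) k - ε * Real.log 2 ≤ Umin c ε k x
      ∧ Umin c ε k x ≤ min (Real.exp (c * x)) k := by
  set z := Real.exp (c * x) with hz
  have hw : wf c ε k x = (k - z) / ε := rfl
  have hlog2 : Real.log 2 = Real.log 2 := rfl
  constructor
  · rcases le_total z k with hzk | hzk
    · -- w ≥ 0 : min = z, need ε log(1+e^w) ≤ ε w + ε log 2
      have hw0 : 0 ≤ (k - z) / ε := div_nonneg (by linarith) hε.le
      have h1 : (1:ℝ) ≤ Real.exp ((k - z)/ε) := Real.one_le_exp hw0
      have h2 : 1 + Real.exp ((k - z)/ε) ≤ 2 * Real.exp ((k - z)/ε) := by linarith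
      have h3 : Real.log (1 + Real.exp ((k - z)/ε))
          ≤ Real.log (2 * Real.exp ((k - z)/ε)) :=
        Real.log_le_log (one_add_exp_pos _) h2
      rw [Real.log_mul (by norm_num) (Real.exp_ne_zero _), Real.log_exp] at h3
      rw [min_eq_left hzk, Umin, hw]
      have hεw : ε * ((k - z)/ε) = k - z := by field_simp
      nlinarith [hε.le]
    · -- w ≤ 0 : min = k, need log(1+e^w) ≤ log 2
      have hw0 : (k - z) / ε ≤ 0 := div_nonpos_of_nonpos_of_nonneg (by linarith) hε.le
      have h1 : Real.exp ((k - z)/ε) ≤ 1 := Real.exp_le_one_iff.mpr hw0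
      have h3 : Real.log (1 + Real.exp ((k - z)/ε)) ≤ Real.log 2 :=
        Real.log_le_log (one_add_exp_pos _) (by linarith)
      rw [min_eq_right hzk, Umin, hw]
      nlinarith [hε.le]
  · have hle_k : Umin c ε k x ≤ k := by
      rw [Umin]
      have h1 : (0:ℝ) ≤ Real.log (1 + Real.exp (wf c ε k x)) := by
        apply Real.log_nonneg
        linarith [Real.exp_pos (wf c ε k x)]
      nlinarith [hε.le]
    have hle_z : Umin c ε k x ≤ z := by
      rw [Umin, hw]
      have h1 : (k - z)/ε ≤ Real.log (1 + Real.exp ((k - z)/ε)) := by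
        have := Real.log_le_log (Real.exp_pos ((k - z)/ε))
          (show Real.exp ((k - z)/ε) ≤ 1 + Real.exp ((k - z)/ε) by linarith)
        rwa [Real.log_exp] at this
      have h2 : ε * ((k - z)/ε) ≤ ε * Real.log (1 + Real.exp ((k - z)/ε)) :=
        mul_le_mul_of_nonneg_left h1 hε.le
      have hεw : ε * ((k - z)/ε) = k - z := by field_simp
      linarith
    exact le_min hle_z hle_k

lemma phiMin_continuous {ε : ℝ} (hε : 0 < ε) (k : ℝ) : Continuous (phiMin ε k) := by
  apply continuous_const.sub
  apply Continuous.mul continuous_const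
  apply Continuous.log
  · exact continuous_const.add (((continuous_const.sub continuous_id).div_const ε).rexp)
  · exact fun z => (one_add_exp_pos _).ne'

end Aux5

section Aux6

variable {P : Measure Ω} [IsProbabilityMeasure P] {X Y : Ω → ℝ} {a b c : ℝ}

lemma min_max_id (z k : ℝ) : min z k = k - max (k - z) 0 := by
  rcases le_total z k with h | h
  · rw [min_eq_left h, max_eq_left (by linarith)]; ring
  · rw [min_eq_right h, max_eq_right (by linarith)]; ring

/-- From `vSD` consistency to comparison of expected put payoffs. -/
lemma pi_cmp_of_vSD (hc : 0 < c)
    (hBZ : BddP P (fun ω => Real.exp (c * X ω)) a b)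
    (hBW : BddP P (fun ω => Real.exp (c * Y ω)) a b)
    (hvsd : vSD P Set.univ (fun x => Real.exp (c * x)) X Y) (k : ℝ) :
    piv P (fun ω => Real.exp (c * Y ω)) k ≤ piv P (fun ω => Real.exp (c * X ω)) k := by
  have hmincont : Continuous (fun z : ℝ => min z k) := continuous_id.min continuous_const
  have hminZ : Integrable (fun ω => min (Real.exp (c * X ω)) k) P :=
    integrable_comp_Z hBZ hmincont
  have hminW : Integrable (fun ω => min (Real.exp (c * Y ω)) k) P :=
    integrable_comp_Z hBW hmincont
  have hmin : ∫ ω, min (Real.exp (c * X ω)) k ∂P ≤ ∫ ω, min (Real.exp (c * Y ω)) k ∂P := by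
    refine le_of_forall_pos_le_add fun η hη => ?_
    have hlog2 : (0:ℝ) < Real.log 2 := Real.log_pos (by norm_num)
    set ε := η / (Real.log 2 + 1) with hεdef
    have hε : 0 < ε := div_pos hη (by linarith)
    have hεlog : ε * Real.log 2 < η := by
      rw [hεdef, div_mul_eq_mul_div, div_lt_iff₀ (by linarith)]
      nlinarith
    have hUX : Integrable (fun ω => Umin c ε k (X ω)) P := by
      have : (fun ω => Umin c ε k (X ω))
          = fun ω => phiMin ε k (Real.exp (c * X ω)) := rfl
      rw [this]
      exact integrable_comp_Z hBZ (phiMin_continuous hε k)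
    have hUY : Integrable (fun ω => Umin c ε k (Y ω)) P := by
      have : (fun ω => Umin c ε k (Y ω))
          = fun ω => phiMin ε k (Real.exp (c * Y ω)) := rfl
      rw [this]
      exact integrable_comp_Z hBW (phiMin_continuous hε k)
    have hvs := hvsd (Umin c ε k) (Umin_isUtility hc hε k)
      (fun x _ => Umin_RA hc hε k x) hUX hUY
    have h1 : ∫ ω, min (Real.exp (c * X ω)) k ∂P - ε * Real.log 2
        ≤ ∫ ω, Umin c ε k (X ω) ∂P := by
      have hpt : ∀ ω, min (Real.exp (c * X ω)) k - ε * Real.log 2 ≤ Umin c ε k (X ω) :=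
        fun ω => (Umin_bounds hε k (X ω)).1
      have hdint : Integrable (fun ω => min (Real.exp (c * X ω)) k - ε * Real.log 2) P :=
        hminZ.sub (integrable_const _)
      have h2' := integral_mono hdint hUX hpt
      rwa [integral_sub hminZ (integrable_const _), integral_const, probReal_univ, one_smul] at h2'
    have h2 : ∫ ω, Umin c ε k (Y ω) ∂P ≤ ∫ ω, min (Real.exp (c * Y ω)) k ∂P :=
      integral_mono hUY hminW fun ω => (Umin_bounds hε k (Y ω)).2
    linarith
  have heqZ : ∫ ω, min (Real.exp (c * X ω)) k ∂P
      = k - piv P (fun ω => Real.exp (c * X ω)) k := by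
    have h0 : ∫ ω, (k - max (k - Real.exp (c * X ω)) 0) ∂P
        = k - piv P (fun ω => Real.exp (c * X ω)) k := by
      rw [integral_sub (integrable_const k) (piv_integrable hBZ k), integral_const,
        probReal_univ, one_smul]
      rfl
    rw [← h0]
    exact integral_congr_ae (Filter.Eventually.of_forall fun ω => min_max_id _ k)
  have heqW : ∫ ω, min (Real.exp (c * Y ω)) k ∂P
      = k - piv P (fun ω => Real.exp (c * Y ω)) k := by
    have h0 : ∫ ω, (k - max (k - Real.exp (c * Y ω)) 0) ∂P
        = k - piv P (fun ω => Real.exp (c * Y ω)) k := by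
      rw [integral_sub (integrable_const k) (piv_integrable hBW k), integral_const,
        probReal_univ, one_smul]
      rfl
    rw [← h0]
    exact integral_congr_ae (Filter.Eventually.of_forall fun ω => min_max_id _ k)
  rw [heqZ, heqW] at hmin
  linarith

end Aux6

section Aux7

variable {P : Measure Ω} [IsProbabilityMeasure P] {X Y : Ω → ℝ} {a b c : ℝ}

/-- From comparison of average quantile functions to `vSD`. -/
lemma vSD_of_A_le (hc : 0 < c)
    (hBZ : BddP P (fun ω => Real.exp (c * X ω)) a b)
    (hBW : BddP P (fun ω => Real.exp (c * Y ω)) a b)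
    (hA : ∀ t ∈ Set.Ioc (0:ℝ) 1,
      Av P (fun ω => Real.exp (c * X ω)) a t ≤ Av P (fun ω => Real.exp (c * Y ω)) a t) :
    vSD P Set.univ (fun x => Real.exp (c * x)) X Y := by
  intro u hu hRA hiX hiY
  have ha2 : 0 < a / 2 := half_pos hBZ.apos
  set φ : ℝ → ℝ := fun z => u (Real.log (max z (a/2)) / c) with hφdef
  set φ' : ℝ → ℝ := fun z => deriv u (Real.log z / c) * (z⁻¹ / c) with hφ'def
  have hud : Differentiable ℝ u := fun x => hu.1 x (Set.mem_univ x)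
  have hupos : ∀ x, 0 < deriv u x := fun x => hu.2.2 x (Set.mem_univ x)
  have hu2 : ∀ x, DifferentiableAt ℝ (deriv u) x := fun x => hu.2.1 x (Set.mem_univ x)
  have hucc : ∀ x, deriv (deriv u) x ≤ c * deriv u x := by
    intro x
    have h1 := hRA x (Set.mem_univ x)
    rw [RA_expc hc.ne' x] at h1
    exact upp_le (hupos x) h1
  have hφc : Continuous φ := by
    apply hud.continuous.comp
    apply Continuous.div_const
    apply Continuous.log (continuous_id.max continuous_const)
    intro z
    exact (lt_of_lt_of_le ha2 (le_max_right _ _)).ne'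
  have hd : ∀ z ∈ Set.Ioi (a/2), HasDerivAt φ (φ' z) z := by
    intro z hz
    have hz0 : 0 < z := lt_trans ha2 hz
    have hlog : HasDerivAt (fun z : ℝ => Real.log z / c) (z⁻¹ / c) z :=
      (Real.hasDerivAt_log hz0.ne').div_const c
    have hcomp : HasDerivAt (fun z => u (Real.log z / c))
        (deriv u (Real.log z / c) * (z⁻¹ / c)) z :=
      ((hud _).hasDerivAt).comp z hlog
    refine HasDerivAt.congr_of_eventuallyEq hcomp ?_
    have hev : ∀ᶠ w in nhds z, a / 2 < w := eventually_gt_nhds hz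
    filter_upwards [hev] with w hw
    rw [hφdef]
    simp only
    rw [max_eq_left hw.le]
  have hd2 : ∀ z ∈ Set.Ioi (a/2), HasDerivAt φ'
      (deriv (deriv u) (Real.log z / c) * (z⁻¹ / c) * (z⁻¹ / c)
        + deriv u (Real.log z / c) * (-(z^2)⁻¹ / c)) z := by
    intro z hz
    have hz0 : 0 < z := lt_trans ha2 hz
    have hlog : HasDerivAt (fun z : ℝ => Real.log z / c) (z⁻¹ / c) z :=
      (Real.hasDerivAt_log hz0.ne').div_const c
    have h1 : HasDerivAt (fun z : ℝ => deriv u (Real.log z / c))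
        (deriv (deriv u) (Real.log z / c) * (z⁻¹ / c)) z :=
      ((hu2 _).hasDerivAt).comp z hlog
    have h2 : HasDerivAt (fun z : ℝ => z⁻¹ / c) (-(z^2)⁻¹ / c) z :=
      (hasDerivAt_inv hz0.ne').div_const c
    exact h1.mul h2
  have hderiv_nonpos : ∀ z ∈ Set.Ioi (a/2),
      deriv (deriv u) (Real.log z / c) * (z⁻¹ / c) * (z⁻¹ / c)
        + deriv u (Real.log z / c) * (-(z^2)⁻¹ / c) ≤ 0 := by
    intro z hz
    have hz0 : 0 < z := lt_trans ha2 hz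
    set A := deriv (deriv u) (Real.log z / c)
    set B := deriv u (Real.log z / c)
    have hAB : A ≤ c * B := hucc _
    have hB : 0 < B := hupos _
    have he1 : (z⁻¹ / c) * (z⁻¹ / c) = (z^2)⁻¹ / c^2 := by
      rw [sq, mul_inv]
      field_simp
    have he2 : A * (z⁻¹ / c) * (z⁻¹ / c) = A * ((z^2)⁻¹ / c^2) := by
      rw [mul_assoc, he1]
    rw [he2]
    have hz2 : 0 < (z^2)⁻¹ := by positivity
    have h3 : A * ((z^2)⁻¹ / c^2) ≤ (c * B) * ((z^2)⁻¹ / c^2) := by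
      apply mul_le_mul_of_nonneg_right hAB
      positivity
    have h4 : (c * B) * ((z^2)⁻¹ / c^2) = B * ((z^2)⁻¹ / c) := by
      field_simp
    have h5 : B * (-(z^2)⁻¹ / c) = -(B * ((z^2)⁻¹ / c)) := by ring
    rw [h5]
    linarith
  have hφ'pos : ∀ z ∈ Set.Ioi (a/2), 0 ≤ φ' z := by
    intro z hz
    have hz0 : 0 < z := lt_trans ha2 hz
    have := hupos (Real.log z / c)
    positivity
  have hφ'contOn : ContinuousOn φ' (Set.Ioi (a/2)) := fun z hz =>
    ((hd2 z hz).differentiableAt.continuousAt).continuousWithinAt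
  have hφ'anti : AntitoneOn φ' (Set.Ioi (a/2)) := by
    apply antitoneOn_of_deriv_nonpos (convex_Ioi _) hφ'contOn
    · intro z hz
      rw [interior_Ioi] at hz
      exact (hd2 z hz).differentiableAt.differentiableWithinAt
    · intro z hz
      rw [interior_Ioi] at hz
      rw [(hd2 z hz).deriv]
      exact hderiv_nonpos z hz
  have hcmp := integral_comp_le hBZ hBW hA (half_lt_self hBZ.apos) hφc hd hφ'pos
    hφ'anti hφ'contOn
  have heq1 : ∫ ω, φ (Real.exp (c * X ω)) ∂P = ∫ ω, u (X ω) ∂P := by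
    refine integral_congr_ae (hBZ.mem.mono fun ω hω => ?_)
    have hmax : max (Real.exp (c * X ω)) (a/2) = Real.exp (c * X ω) :=
      max_eq_left (le_trans (by linarith [hBZ.apos]) hω.1)
    rw [hφdef]
    simp only
    rw [hmax, Real.log_exp, mul_div_cancel_left₀ _ hc.ne']
  have heq2 : ∫ ω, φ (Real.exp (c * Y ω)) ∂P = ∫ ω, u (Y ω) ∂P := by
    refine integral_congr_ae (hBW.mem.mono fun ω hω => ?_)
    have hmax : max (Real.exp (c * Y ω)) (a/2) = Real.exp (c * Y ω) :=
      max_eq_left (le_trans (by linarith [hBZ.apos]) hω.1)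
    rw [hφdef]
    simp only
    rw [hmax, Real.log_exp, mul_div_cancel_left₀ _ hc.ne']
  rw [heq1, heq2] at hcmp
  exact hcmp

end Aux7

section Aux8

variable {P : Measure Ω} [IsProbabilityMeasure P] {Z W : Ω → ℝ} {a b : ℝ}

lemma intervalIntegral_qf_eq_Av (hB : BddP P Z a b) {t : ℝ} (ht : t ∈ Set.Ioc (0:ℝ) 1) :
    ∫ r in (0:ℝ)..t, qf P Z r = Av P Z a t := by
  rw [intervalIntegral.integral_of_le ht.1.le]
  have h1 : ∫ r in Set.Ioc (0:ℝ) t, qf P Z r = ∫ r in Set.Ioc (0:ℝ) t, Qv P Z a r :=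
    setIntegral_congr_fun measurableSet_Ioc fun r hr =>
      (Qv_eq hB ⟨hr.1, hr.2.trans ht.2⟩).symm
  rw [h1, Av, MeasureTheory.integral_Ioc_eq_integral_Ioo]

lemma ES_eq_Av (hB : BddP P Z a b) {p : ℝ} (hp : p ∈ Set.Ico (0:ℝ) 1) :
    ES P p Z = -(1 / (1 - p)) * Av P Z a (1 - p) := by
  rw [ES, if_pos hp.2, intervalIntegral_qf_eq_Av hB ⟨by linarith [hp.2], by linarith [hp.1]⟩]

lemma Av_le_const (hB : BddP P Z a b) {t : ℝ} (ht : t ∈ Set.Ioc (0:ℝ) 1) {m : ℝ}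
    (hm : ∀ r ∈ Set.Ioo (0:ℝ) t, Qv P Z a r ≤ m) : Av P Z a t ≤ m * t := by
  have h1 : Av P Z a t ≤ ∫ _ in Set.Ioo (0:ℝ) t, m :=
    setIntegral_mono_on (QvIntegrableOn hB) (integrableOn_const (by simp [Real.volume_Ioo]))
      measurableSet_Ioo hm
  rwa [setIntegral_const, Real.volume_real_Ioo, sub_zero, max_eq_left ht.1.le,
    smul_eq_mul, mul_comm] at h1

lemma const_le_Av (hB : BddP P Z a b) {t : ℝ} (ht : t ∈ Set.Ioc (0:ℝ) 1) {m : ℝ}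
    (hm : ∀ r ∈ Set.Ioo (0:ℝ) t, m ≤ Qv P Z a r) : m * t ≤ Av P Z a t := by
  have h1 : ∫ _ in Set.Ioo (0:ℝ) t, m ≤ Av P Z a t :=
    setIntegral_mono_on (integrableOn_const (by simp [Real.volume_Ioo]))
      (QvIntegrableOn hB) measurableSet_Ioo hm
  rwa [setIntegral_const, Real.volume_real_Ioo, sub_zero, max_eq_left ht.1.le,
    smul_eq_mul, mul_comm] at h1

lemma rhoW_set_nonempty (hB : BddP P Z a b) :
    ({m : ℝ | ∀ᵐ ω ∂P, -Z ω ≤ m}).Nonempty :=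
  ⟨-a, hB.mem.mono fun ω hω => by linarith [hω.1]⟩

lemma rhoW_set_bddBelow (hB : BddP P Z a b) :
    BddBelow {m : ℝ | ∀ᵐ ω ∂P, -Z ω ≤ m} := by
  haveI : (MeasureTheory.ae P).NeBot := ae_neBot.mpr (IsProbabilityMeasure.ne_zero P)
  refine ⟨-b, fun m hm => ?_⟩
  have hm' : ∀ᵐ ω ∂P, -Z ω ≤ m := hm
  have hcomb : ∀ᵐ ω ∂P, -Z ω ≤ m ∧ Z ω ∈ Set.Icc a b := hm'.and hB.mem
  rcases hcomb.exists with ⟨ω, h1, h2⟩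
  linarith [h2.2]

lemma rhoW_le_neg_a (hB : BddP P Z a b) : rhoW P Z ≤ -a :=
  csInf_le (rhoW_set_bddBelow hB) (hB.mem.mono fun ω hω => by linarith [hω.1])

lemma neg_b_le_rhoW (hB : BddP P Z a b) : -b ≤ rhoW P Z := by
  haveI : (MeasureTheory.ae P).NeBot := ae_neBot.mpr (IsProbabilityMeasure.ne_zero P)
  refine le_csInf (rhoW_set_nonempty hB) fun m hm => ?_
  have hm' : ∀ᵐ ω ∂P, -Z ω ≤ m := hm
  have hcomb : ∀ᵐ ω ∂P, -Z ω ≤ m ∧ Z ω ∈ Set.Icc a b := hm'.and hB.mem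
  rcases hcomb.exists with ⟨ω, h1, h2⟩
  linarith [h2.2]

lemma ES_le_rhoW (hB : BddP P Z a b) {p : ℝ} (hp : p ∈ Set.Ico (0:ℝ) 1) :
    ES P p Z ≤ rhoW P Z := by
  refine le_csInf (rhoW_set_nonempty hB) fun m hm => ?_
  have hm' : ∀ᵐ ω ∂P, -Z ω ≤ m := hm
  have ht : (1 - p) ∈ Set.Ioc (0:ℝ) 1 := ⟨by linarith [hp.2], by linarith [hp.1]⟩
  have hq : ∀ r ∈ Set.Ioo (0:ℝ) (1 - p), -m ≤ Qv P Z a r := by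
    intro r hr
    have hr1 : r ∈ Set.Ioc (0:ℝ) 1 := ⟨hr.1, (hr.2.trans_le ht.2).le⟩
    rw [Qv_eq hB hr1]
    exact le_qf hB (hm'.mono fun ω hω => by linarith) hr1.1 hr1.2
  have h1 : (-m) * (1 - p) ≤ Av P Z a (1 - p) := const_le_Av hB ht hq
  rw [ES_eq_Av hB hp]
  have hpos : 0 < 1 - p := ht.1
  rw [neg_mul, neg_le]
  have he : 1 / (1 - p) * ((-m) * (1 - p)) = -m := by field_simp
  calc (-m) = 1 / (1 - p) * ((-m) * (1 - p)) := he.symm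
    _ ≤ 1 / (1 - p) * Av P Z a (1 - p) :=
        mul_le_mul_of_nonneg_left h1 (by positivity)

lemma ES_mono_p (hB : BddP P Z a b) {p p' : ℝ} (hp : 0 ≤ p) (hpp' : p ≤ p')
    (hp' : p' ≤ 1) : ES P p Z ≤ ES P p' Z := by
  rcases eq_or_lt_of_le hp' with h1 | h1
  · rcases eq_or_lt_of_le hpp' with h2 | h2
    · rw [h2, h1]
    · have hlt : p < 1 := h2.trans_le hp'
      have : ES P p' Z = rhoW P Z := by rw [ES, h1, if_neg (lt_irrefl 1)]
      rw [this]
      exact ES_le_rhoW hB ⟨hp, hlt⟩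
  · -- p ≤ p' < 1
    have hplt : p < 1 := lt_of_le_of_lt hpp' h1
    set t := 1 - p with htdef
    set t' := 1 - p' with ht'def
    have ht : t ∈ Set.Ioc (0:ℝ) 1 := ⟨by linarith, by linarith⟩
    have ht' : t' ∈ Set.Ioc (0:ℝ) 1 := ⟨by linarith, by linarith⟩
    have htt' : t' ≤ t := by simp only [htdef, ht'def]; linarith
    rw [ES_eq_Av hB ⟨hp, hplt⟩, ES_eq_Av hB ⟨hp.trans hpp', h1⟩]
    have hkey : t * Av P Z a t' ≤ t' * Av P Z a t := by
      have hsplit : Av P Z a t = Av P Z a t' + ∫ r in Set.Ico t' t, Qv P Z a r := by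
        rw [Av, Av]
        rw [show Set.Ioo (0:ℝ) t = Set.Ioo 0 t' ∪ Set.Ico t' t from
          (Set.Ioo_union_Ico_eq_Ioo ht'.1 htt').symm]
        rw [setIntegral_union (by
            rw [Set.disjoint_left]
            rintro r ⟨_, hr2⟩ ⟨hr3, _⟩
            exact absurd hr3 (not_le.mpr hr2)) measurableSet_Ico
          (QvIntegrableOn hB)
          ((QvIntegrableOn hB (t := t)).mono_set (fun r hr => ⟨lt_of_lt_of_le ht'.1 hr.1, hr.2⟩))]
      have hb1 : Av P Z a t' ≤ Qv P Z a t' * t' :=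
        Av_le_const hB ht' fun r hr => Qv_mono hB hr.2.le
      have hb2 : (t - t') * Qv P Z a t' ≤ ∫ r in Set.Ico t' t, Qv P Z a r := by
        have h1' : ∫ _ in Set.Ico t' t, Qv P Z a t' ≤ ∫ r in Set.Ico t' t, Qv P Z a r :=
          setIntegral_mono_on (integrableOn_const (by simp [Real.volume_Ico]))
            ((QvIntegrableOn hB (t := t)).mono_set (fun r hr => ⟨lt_of_lt_of_le ht'.1 hr.1, hr.2⟩))
            measurableSet_Ico (fun r hr => Qv_mono hB hr.1)
        rwa [setIntegral_const, Real.volume_real_Ico, max_eq_left (by linarith : (0:ℝ) ≤ t - t'),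
          smul_eq_mul] at h1'
      nlinarith [ht'.1, ht.1]
    have h2 : 0 < t := ht.1
    have h3 : 0 < t' := ht'.1
    rw [neg_mul, neg_mul, neg_le_neg_iff]
    rw [div_mul_eq_mul_div, div_mul_eq_mul_div, one_mul, one_mul,
      div_le_div_iff₀ h3 h2]
    linarith [hkey]

lemma ES_bounds (hB : BddP P Z a b) {p : ℝ} (hp : p ∈ Set.Icc (0:ℝ) 1) :
    ES P p Z ∈ Set.Icc (-b) (-a) := by
  rcases lt_or_ge p 1 with h1 | h1
  · have hpI : p ∈ Set.Ico (0:ℝ) 1 := ⟨hp.1, h1⟩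
    have ht : (1 - p) ∈ Set.Ioc (0:ℝ) 1 := ⟨by linarith, by linarith [hp.1]⟩
    have hub : Av P Z a (1 - p) ≤ b * (1 - p) :=
      Av_le_const hB ht fun r hr => (Qv_mem hB r).2
    have hlb : a * (1 - p) ≤ Av P Z a (1 - p) :=
      const_le_Av hB ht fun r hr => (Qv_mem hB r).1
    rw [ES_eq_Av hB hpI]
    have h2 : 0 < 1 - p := ht.1
    have hbq : 1 / (1 - p) * (b * (1 - p)) = b := by field_simp
    have haq : 1 / (1 - p) * (a * (1 - p)) = a := by field_simp
    constructor
    · rw [neg_mul, neg_le_neg_iff]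
      calc 1 / (1 - p) * Av P Z a (1 - p) ≤ 1 / (1 - p) * (b * (1 - p)) :=
            mul_le_mul_of_nonneg_left hub (by positivity)
        _ = b := hbq
    · rw [neg_mul, neg_le_neg_iff]
      calc a = 1 / (1 - p) * (a * (1 - p)) := haq.symm
        _ ≤ 1 / (1 - p) * Av P Z a (1 - p) :=
            mul_le_mul_of_nonneg_left hlb (by positivity)
  · have hp1 : p = 1 := le_antisymm hp.2 h1
    rw [ES, hp1, if_neg (lt_irrefl 1)]
    exact ⟨neg_b_le_rhoW hB, rhoW_le_neg_a hB⟩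

end Aux8

section Aux9

variable {P : Measure Ω} [IsProbabilityMeasure P] {Z W : Ω → ℝ} {a b : ℝ}

lemma cdf'_scale {s : ℝ} (hs : 0 < s) (x : ℝ) :
    cdf' P (fun ω => s * Z ω) x = cdf' P Z (x / s) := by
  rw [cdf', cdf']
  have hset : {ω | s * Z ω ≤ x} = {ω | Z ω ≤ x / s} := by
    ext ω
    rw [Set.mem_setOf_eq, Set.mem_setOf_eq, le_div_iff₀ hs, mul_comm]
  rw [hset]

lemma qf_scale (hB : BddP P Z a b) {s : ℝ} (hs : 0 < s) {r : ℝ}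
    (hr : r ∈ Set.Ioc (0:ℝ) 1) :
    qf P (fun ω => s * Z ω) r = s * qf P Z r := by
  have hset : {x : ℝ | r ≤ cdf' P (fun ω => s * Z ω) x}
      = (fun y => s * y) '' {y : ℝ | r ≤ cdf' P Z y} := by
    ext x
    simp only [Set.mem_image, Set.mem_setOf_eq, cdf'_scale hs]
    constructor
    · intro h
      exact ⟨x / s, h, by field_simp⟩
    · rintro ⟨y, hy, rfl⟩
      have he : s * y / s = y := by field_simp
      rwa [he]
  show sInf {x : ℝ | r ≤ cdf' P (fun ω => s * Z ω) x}
      = s * sInf {y : ℝ | r ≤ cdf' P Z y}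
  rw [hset]
  exact (Monotone.map_csInf_of_continuousAt
    ((continuous_const.mul continuous_id).continuousAt)
    (fun u v huv => mul_le_mul_of_nonneg_left huv hs.le)
    (qf_set_nonempty hB hr.2) (qf_set_bddBelow hB hr.1)).symm

lemma rhoW_scale (hB : BddP P Z a b) {s : ℝ} (hs : 0 < s) :
    rhoW P (fun ω => s * Z ω) = s * rhoW P Z := by
  have hset : {m : ℝ | ∀ᵐ ω ∂P, -(s * Z ω) ≤ m}
      = (fun y => s * y) '' {m : ℝ | ∀ᵐ ω ∂P, -Z ω ≤ m} := by
    ext m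
    simp only [Set.mem_image, Set.mem_setOf_eq]
    constructor
    · intro h
      refine ⟨m / s, h.mono fun ω hω => ?_, by field_simp⟩
      rw [le_div_iff₀ hs]
      have he : -Z ω * s = -(s * Z ω) := by ring
      rw [he]
      exact hω
    · rintro ⟨m', hm', rfl⟩
      refine hm'.mono fun ω hω => ?_
      have := mul_le_mul_of_nonneg_left hω hs.le
      have he : s * -Z ω = -(s * Z ω) := by ring
      rw [he] at this
      exact this
  rw [rhoW, rhoW, hset]
  exact (Monotone.map_csInf_of_continuousAt
    ((continuous_const.mul continuous_id).continuousAt)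
    (fun u v huv => mul_le_mul_of_nonneg_left huv hs.le)
    (rhoW_set_nonempty hB) (rhoW_set_bddBelow hB)).symm

lemma ES_scale (hB : BddP P Z a b) {s : ℝ} (hs : 0 < s) {p : ℝ}
    (hp : p ∈ Set.Icc (0:ℝ) 1) :
    ES P p (fun ω => s * Z ω) = s * ES P p Z := by
  rcases lt_or_ge p 1 with h1 | h1
  · have ht : (1 - p) ∈ Set.Ioc (0:ℝ) 1 := ⟨by linarith, by linarith [hp.1]⟩
    rw [ES, if_pos h1, ES, if_pos h1]
    have hqeq : ∫ r in (0:ℝ)..(1 - p), qf P (fun ω => s * Z ω) r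
        = s * ∫ r in (0:ℝ)..(1 - p), qf P Z r := by
      rw [intervalIntegral.integral_of_le ht.1.le, intervalIntegral.integral_of_le ht.1.le,
        ← integral_const_mul]
      exact setIntegral_congr_fun measurableSet_Ioc fun r hr =>
        qf_scale hB hs ⟨hr.1, hr.2.trans ht.2⟩
    rw [hqeq]
    ring
  · have hp1 : p = 1 := le_antisymm hp.2 h1
    rw [hp1, ES, if_neg (lt_irrefl 1), ES, if_neg (lt_irrefl 1)]
    exact rhoW_scale hB hs

lemma rhoW_cmp_of_pi (hBZ : BddP P Z a b) (hBW : BddP P W a b)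
    (hpi : ∀ k, piv P W k ≤ piv P Z k) : rhoW P W ≤ rhoW P Z := by
  apply csInf_le_csInf (rhoW_set_bddBelow hBW) (rhoW_set_nonempty hBZ)
  intro m hm
  have hm' : ∀ᵐ ω ∂P, -Z ω ≤ m := hm
  have hZ0 : piv P Z (-m) = 0 := by
    rw [piv, integral_congr_ae (g := fun _ => (0:ℝ))
      (hm'.mono fun ω hω => max_eq_right (by linarith))]
    simp
  have hW0 : piv P W (-m) = 0 :=
    le_antisymm (by rw [← hZ0]; exact hpi (-m)) (piv_nonneg _)
  have hnn : (0:Ω → ℝ) ≤ fun ω => max (-m - W ω) 0 := fun ω => le_max_right _ _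
  have hae := (integral_eq_zero_iff_of_nonneg hnn (piv_integrable hBW (-m))).mp hW0
  show ∀ᵐ ω ∂P, -W ω ≤ m
  filter_upwards [hae] with ω hω
  have h0 : max (-m - W ω) 0 = 0 := hω
  have : -m - W ω ≤ 0 := by
    by_contra hcon
    push_neg at hcon
    rw [max_eq_left hcon.le] at h0
    linarith
  linarith

lemma ES_cmp_of_vSD {X Y : Ω → ℝ} {c : ℝ} (hc : 0 < c)
    (hBZ : BddP P (fun ω => Real.exp (c * X ω)) a b)
    (hBW : BddP P (fun ω => Real.exp (c * Y ω)) a b)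
    (hvsd : vSD P Set.univ (fun x => Real.exp (c * x)) X Y)
    {p : ℝ} (hp : p ∈ Set.Icc (0:ℝ) 1) :
    ES P p (fun ω => Real.exp (c * Y ω)) ≤ ES P p (fun ω => Real.exp (c * X ω)) := by
  have hpi := pi_cmp_of_vSD hc hBZ hBW hvsd
  rcases lt_or_ge p 1 with h1 | h1
  · have ht : (1 - p) ∈ Set.Ioc (0:ℝ) 1 := ⟨by linarith, by linarith [hp.1]⟩
    have hAle := A_le_of_pi_le hBZ hBW hpi ht
    rw [ES_eq_Av hBW ⟨hp.1, h1⟩, ES_eq_Av hBZ ⟨hp.1, h1⟩, neg_mul, neg_mul,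
      neg_le_neg_iff]
    exact mul_le_mul_of_nonneg_left hAle (div_pos one_pos ht.1).le
  · have hp1 : p = 1 := le_antisymm hp.2 h1
    rw [hp1, ES, if_neg (lt_irrefl 1), ES, if_neg (lt_irrefl 1)]
    exact rhoW_cmp_of_pi hBZ hBW hpi

lemma vSD_of_ES_cmp {X Y : Ω → ℝ} {c : ℝ} (hc : 0 < c)
    (hBZ : BddP P (fun ω => Real.exp (c * X ω)) a b)
    (hBW : BddP P (fun ω => Real.exp (c * Y ω)) a b)
    (hES : ∀ p ∈ Set.Ico (0:ℝ) 1,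
      ES P p (fun ω => Real.exp (c * Y ω)) ≤ ES P p (fun ω => Real.exp (c * X ω))) :
    vSD P Set.univ (fun x => Real.exp (c * x)) X Y := by
  apply vSD_of_A_le hc hBZ hBW
  intro t ht
  have hp : (1 - t) ∈ Set.Ico (0:ℝ) 1 := ⟨by linarith [ht.2], by linarith [ht.1]⟩
  have hcmp := hES _ hp
  rw [ES_eq_Av hBW hp, ES_eq_Av hBZ hp] at hcmp
  have h1t : 1 - (1 - t) = t := by ring
  rw [h1t, neg_mul, neg_mul, neg_le_neg_iff] at hcmp
  have ht0 : (0:ℝ) < t := ht.1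
  have h2 := mul_le_mul_of_nonneg_left hcmp ht0.le
  have e1 : t * (1 / t * Av P (fun ω => Real.exp (c * X ω)) a t)
      = Av P (fun ω => Real.exp (c * X ω)) a t := by field_simp
  have e2 : t * (1 / t * Av P (fun ω => Real.exp (c * Y ω)) a t)
      = Av P (fun ω => Real.exp (c * Y ω)) a t := by field_simp
  rw [e1, e2] at h2
  exact h2

end Aux9

section Aux10

variable {P : Measure Ω} [IsProbabilityMeasure P] {c : ℝ}

lemma memX_bddP (hc : 0 < c) {X : Ω → ℝ} (hX : MemX P X) {C : ℝ}
    (hC : ∀ᵐ ω ∂P, |X ω| ≤ C) :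
    BddP P (fun ω => Real.exp (c * X ω)) (Real.exp (-(c * C))) (Real.exp (c * C)) := by
  refine ⟨(hX.1.const_mul c).exp, Real.exp_pos _, hC.mono fun ω hω => ?_⟩
  have hab := abs_le.mp hω
  have h2 : c * X ω ≤ c * C := mul_le_mul_of_nonneg_left hab.2 hc.le
  have h1 : c * (-C) ≤ c * X ω := mul_le_mul_of_nonneg_left hab.1 hc.le
  have h1' : -(c * C) = c * (-C) := by ring
  exact ⟨Real.exp_le_exp.mpr (by rw [h1']; exact h1), Real.exp_le_exp.mpr h2⟩

lemma bdd_pair (hc : 0 < c) {X Y : Ω → ℝ} (hX : MemX P X) (hY : MemX P Y) :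
    ∃ a b : ℝ, BddP P (fun ω => Real.exp (c * X ω)) a b
      ∧ BddP P (fun ω => Real.exp (c * Y ω)) a b := by
  obtain ⟨CX, hCX⟩ := hX.2
  obtain ⟨CY, hCY⟩ := hY.2
  exact ⟨Real.exp (-(c * max CX CY)), Real.exp (c * max CX CY),
    memX_bddP hc hX (hCX.mono fun ω hω => hω.trans (le_max_left _ _)),
    memX_bddP hc hY (hCY.mono fun ω hω => hω.trans (le_max_right _ _))⟩

lemma memX_memL1 (hc : 0 < c) {X : Ω → ℝ} (hX : MemX P X) :
    MemL1 P Set.univ (fun x => Real.exp (c * x)) X := by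
  obtain ⟨a, b, hB, _⟩ := bdd_pair hc hX hX
  exact ⟨hX.1, Filter.Eventually.of_forall fun ω => Set.mem_univ _,
    integrable_comp_Z hB continuous_id⟩

lemma memX_add {X : Ω → ℝ} {P : Measure Ω} (hX : MemX P X) (s : ℝ) :
    MemX P (fun ω => X ω + s) := by
  obtain ⟨C, hC⟩ := hX.2
  exact ⟨hX.1.add_const s, C + |s|, hC.mono fun ω hω =>
    (abs_add_le _ _).trans (by linarith [le_abs_self s])⟩

lemma exp_shift (c s : ℝ) (X : Ω → ℝ) :
    (fun ω => Real.exp (c * (X ω + s))) = fun ω => Real.exp (c * s) * Real.exp (c * X ω) := by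
  funext ω
  rw [← Real.exp_add]
  congr 1
  ring

end Aux10

/-- For `c > 0`, a monetary risk measure `ρ` is
`𝔢_c`-SD-consistent iff it admits the representation
`ρ(X) = inf_{g ∈ 𝒢} sup_{p ∈ [0,1]} (1/c) log (g(p) / ES_p(e^{cX}))`
for a family `𝒢` of nondecreasing functions `g : [0,1] → (-∞,0)`. -/
theorem statement7 (P : Measure Ω) [IsProbabilityMeasure P] (hP : Atomless P)
    (c : ℝ) (hc : 0 < c)
    (ρ : (Ω → ℝ) → ℝ) (hρ : IsRiskMeasure P ρ) :
    VSDConsistent P Set.univ (fun x => Real.exp (c * x)) {X | MemX P X} ρ ↔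
      ∃ 𝒢 : Set (ℝ → ℝ), 𝒢.Nonempty ∧
        (∀ g ∈ 𝒢, MonotoneOn g (Set.Icc 0 1) ∧ ∀ p ∈ Set.Icc (0:ℝ) 1, g p < 0) ∧
        (∀ X : Ω → ℝ, MemX P X →
          ρ X = ⨅ g : 𝒢, ⨆ p : Set.Icc (0:ℝ) 1,
            (1 / c) *
              Real.log ((g : ℝ → ℝ) p.1 / ES P p.1 (fun ω => Real.exp (c * X ω)))) := by
  haveI : Nonempty (Set.Icc (0:ℝ) 1) := ⟨⟨0, le_rfl, zero_le_one⟩⟩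
  constructor
  · intro hcons
    set G : Set (ℝ → ℝ) :=
      (fun Y : Ω → ℝ => fun p : ℝ =>
        Real.exp (c * ρ Y) * ES P p (fun ω => Real.exp (c * Y ω))) '' {Y | MemX P Y}
      with hGdef
    have hzero : MemX P (fun _ => (0:ℝ)) :=
      ⟨measurable_const, 0, Filter.Eventually.of_forall fun ω => by simp⟩
    refine ⟨G, ⟨_, ⟨(fun _ => (0:ℝ)), hzero, rfl⟩⟩, ?_, ?_⟩
    · rintro g ⟨Y, hY, rfl⟩
      obtain ⟨a, b, hB, _⟩ := bdd_pair hc hY hY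
      constructor
      · intro p hp p' hp' hpp'
        exact mul_le_mul_of_nonneg_left (ES_mono_p hB hp.1 hpp' hp'.2) (Real.exp_pos _).le
      · intro p hp
        have h1 := (ES_bounds hB hp).2
        have h2 := hB.apos
        exact mul_neg_of_pos_of_neg (Real.exp_pos _) (by linarith)
    · intro X hX
      have claimA : ∀ g ∈ G, ρ X ≤ ⨆ p : Set.Icc (0:ℝ) 1,
          (1 / c) * Real.log (g p.1 / ES P p.1 (fun ω => Real.exp (c * X ω))) := by
        rintro g ⟨Y, hY, rfl⟩
        obtain ⟨a, b, hBY, hBX⟩ := bdd_pair hc hY hX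
        have ha : 0 < a := hBX.apos
        show ρ X ≤ ⨆ p : Set.Icc (0:ℝ) 1, (1 / c) * Real.log
          ((Real.exp (c * ρ Y) * ES P p.1 (fun ω => Real.exp (c * Y ω)))
            / ES P p.1 (fun ω => Real.exp (c * X ω)))
        set term : Set.Icc (0:ℝ) 1 → ℝ := fun p =>
          (1 / c) * Real.log ((Real.exp (c * ρ Y) * ES P p.1 (fun ω => Real.exp (c * Y ω)))
            / ES P p.1 (fun ω => Real.exp (c * X ω))) with hterm
        have hESX : ∀ p : Set.Icc (0:ℝ) 1,
            ES P p.1 (fun ω => Real.exp (c * X ω)) ∈ Set.Icc (-b) (-a) :=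
          fun p => ES_bounds hBX p.2
        have hESY : ∀ p : Set.Icc (0:ℝ) 1,
            ES P p.1 (fun ω => Real.exp (c * Y ω)) ∈ Set.Icc (-b) (-a) :=
          fun p => ES_bounds hBY p.2
        have hXneg : ∀ p : Set.Icc (0:ℝ) 1,
            ES P p.1 (fun ω => Real.exp (c * X ω)) < 0 :=
          fun p => lt_of_le_of_lt (hESX p).2 (by linarith)
        have hYneg : ∀ p : Set.Icc (0:ℝ) 1,
            ES P p.1 (fun ω => Real.exp (c * Y ω)) < 0 :=
          fun p => lt_of_le_of_lt (hESY p).2 (by linarith)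
        have hratpos : ∀ p : Set.Icc (0:ℝ) 1,
            0 < (Real.exp (c * ρ Y) * ES P p.1 (fun ω => Real.exp (c * Y ω)))
              / ES P p.1 (fun ω => Real.exp (c * X ω)) := by
          intro p
          apply div_pos_iff.mpr
          exact Or.inr ⟨mul_neg_of_pos_of_neg (Real.exp_pos _) (hYneg p), hXneg p⟩
        have hbddA : BddAbove (Set.range term) := by
          refine ⟨(1 / c) * Real.log (Real.exp (c * ρ Y) * b / a), ?_⟩
          rintro _ ⟨p, rfl⟩
          refine mul_le_mul_of_nonneg_left ?_ (by positivity)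
          apply Real.log_le_log (hratpos p)
          have h1 : Real.exp (c * ρ Y) * ES P p.1 (fun ω => Real.exp (c * Y ω))
              / ES P p.1 (fun ω => Real.exp (c * X ω))
              = Real.exp (c * ρ Y) * ((-(ES P p.1 (fun ω => Real.exp (c * Y ω))))
                / (-(ES P p.1 (fun ω => Real.exp (c * X ω))))) := by
            rw [neg_div_neg_eq]
            ring
          rw [h1]
          have h2 : (-(ES P p.1 (fun ω => Real.exp (c * Y ω))))
              / (-(ES P p.1 (fun ω => Real.exp (c * X ω)))) ≤ b / a := by
            apply div_le_div₀ (by linarith [hBX.ab]) (by linarith [(hESY p).1]) ha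
              (by linarith [(hESX p).2])
          calc Real.exp (c * ρ Y) * ((-(ES P p.1 (fun ω => Real.exp (c * Y ω))))
              / (-(ES P p.1 (fun ω => Real.exp (c * X ω)))))
              ≤ Real.exp (c * ρ Y) * (b / a) :=
                mul_le_mul_of_nonneg_left h2 (Real.exp_pos _).le
            _ = Real.exp (c * ρ Y) * b / a := by ring
        by_contra hlt
        push_neg at hlt
        set T := ⨆ p : Set.Icc (0:ℝ) 1, term p with hT
        set s : ℝ := T - ρ Y with hs
        have hX' : MemX P (fun ω => X ω + s) := memX_add hX s
        have hEScmp : ∀ p : Set.Icc (0:ℝ) 1,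
            ES P p.1 (fun ω => Real.exp (c * (X ω + s)))
              ≤ ES P p.1 (fun ω => Real.exp (c * Y ω)) := by
          intro p
          have h0 : term p ≤ T := le_ciSup hbddA p
          have hlog : Real.log ((Real.exp (c * ρ Y) * ES P p.1 (fun ω => Real.exp (c * Y ω)))
              / ES P p.1 (fun ω => Real.exp (c * X ω))) ≤ c * T := by
            have h1 := mul_le_mul_of_nonneg_left h0 hc.le
            have h2 : c * ((1 / c) * Real.log ((Real.exp (c * ρ Y)
                * ES P p.1 (fun ω => Real.exp (c * Y ω)))
                / ES P p.1 (fun ω => Real.exp (c * X ω))))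
                = Real.log ((Real.exp (c * ρ Y) * ES P p.1 (fun ω => Real.exp (c * Y ω)))
                / ES P p.1 (fun ω => Real.exp (c * X ω))) := by
              field_simp
            rw [hterm] at h1
            rw [← h2]
            exact h1
          have hRp := (Real.log_le_iff_le_exp (hratpos p)).mp hlog
          have h3 := mul_le_mul_of_nonpos_right hRp (hXneg p).le
          have h4 : Real.exp (c * ρ Y) * ES P p.1 (fun ω => Real.exp (c * Y ω))
              / ES P p.1 (fun ω => Real.exp (c * X ω))
              * ES P p.1 (fun ω => Real.exp (c * X ω))
              = Real.exp (c * ρ Y) * ES P p.1 (fun ω => Real.exp (c * Y ω)) :=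
            div_mul_cancel₀ _ (hXneg p).ne
          rw [h4] at h3
          -- h3 : exp (c*T) * ESX ≤ exp (c*ρY) * ESY
          have h5 := mul_le_mul_of_nonneg_left h3 (Real.exp_pos (-(c * ρ Y))).le
          have e1 : Real.exp (-(c * ρ Y)) * (Real.exp (c * T)
              * ES P p.1 (fun ω => Real.exp (c * X ω)))
              = Real.exp (c * s) * ES P p.1 (fun ω => Real.exp (c * X ω)) := by
            rw [← mul_assoc, ← Real.exp_add]
            have harg : -(c * ρ Y) + c * T = c * s := by rw [hs]; ring
            rw [harg]
          have e2 : Real.exp (-(c * ρ Y)) * (Real.exp (c * ρ Y)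
              * ES P p.1 (fun ω => Real.exp (c * Y ω)))
              = ES P p.1 (fun ω => Real.exp (c * Y ω)) := by
            rw [← mul_assoc, ← Real.exp_add]
            have harg : -(c * ρ Y) + c * ρ Y = 0 := by ring
            rw [harg, Real.exp_zero, one_mul]
          rw [e1, e2] at h5
          have hESshift : ES P p.1 (fun ω => Real.exp (c * (X ω + s)))
              = Real.exp (c * s) * ES P p.1 (fun ω => Real.exp (c * X ω)) := by
            rw [exp_shift c s X]
            exact ES_scale hBX (Real.exp_pos _) p.2
          rw [hESshift]
          exact h5
        obtain ⟨a2, b2, hBY2, hBs⟩ := bdd_pair hc hY hX'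
        have hvsd : vSD P Set.univ (fun x => Real.exp (c * x)) Y (fun ω => X ω + s) := by
          apply vSD_of_ES_cmp hc hBY2 hBs
          intro p hp
          exact hEScmp ⟨p, hp.1, hp.2.le⟩
        have hcon := hcons Y (fun ω => X ω + s) hY hX' (memX_memL1 hc hY)
          (memX_memL1 hc hX') hvsd
        have hcash := hρ.2 X hX s
        rw [hcash] at hcon
        -- hcon : ρ X - s ≤ ρ Y, s = T - ρ Y, hlt : T < ρ X
        have : ρ X ≤ T := by rw [hs] at hcon; linarith
        exact absurd this (not_le.mpr hlt)
      have hmemgX : (fun p : ℝ => Real.exp (c * ρ X)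
          * ES P p (fun ω => Real.exp (c * X ω))) ∈ G := ⟨X, hX, rfl⟩
      obtain ⟨a, b, hBX, _⟩ := bdd_pair hc hX hX
      have hXneg : ∀ p : Set.Icc (0:ℝ) 1,
          ES P p.1 (fun ω => Real.exp (c * X ω)) < 0 :=
        fun p => lt_of_le_of_lt (ES_bounds hBX p.2).2 (by linarith [hBX.apos])
      have hvalX : (⨆ p : Set.Icc (0:ℝ) 1, (1 / c) * Real.log
          ((Real.exp (c * ρ X) * ES P p.1 (fun ω => Real.exp (c * X ω)))
            / ES P p.1 (fun ω => Real.exp (c * X ω)))) = ρ X := by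
        have hconst : ∀ p : Set.Icc (0:ℝ) 1, (1 / c) * Real.log
            ((Real.exp (c * ρ X) * ES P p.1 (fun ω => Real.exp (c * X ω)))
              / ES P p.1 (fun ω => Real.exp (c * X ω))) = ρ X := by
          intro p
          rw [mul_div_assoc, div_self (hXneg p).ne, mul_one, Real.log_exp]
          field_simp
        have hfun : (fun p : Set.Icc (0:ℝ) 1 => (1 / c) * Real.log
            ((Real.exp (c * ρ X) * ES P p.1 (fun ω => Real.exp (c * X ω)))
              / ES P p.1 (fun ω => Real.exp (c * X ω))))
            = fun _ => ρ X := funext hconst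
        rw [hfun]
        exact ciSup_const
      haveI : Nonempty (↥G) := ⟨⟨_, hmemgX⟩⟩
      refine le_antisymm (le_ciInf fun g => claimA g.1 g.2) ?_
      have hbddB : BddBelow (Set.range (fun g : G => ⨆ p : Set.Icc (0:ℝ) 1,
          (1 / c) * Real.log ((g : ℝ → ℝ) p.1
            / ES P p.1 (fun ω => Real.exp (c * X ω))))) := by
        refine ⟨ρ X, ?_⟩
        rintro _ ⟨g, rfl⟩
        exact claimA g.1 g.2
      have hle := ciInf_le hbddB (⟨_, hmemgX⟩ : G)
      calc (⨅ g : G, ⨆ p : Set.Icc (0:ℝ) 1, (1 / c) * Real.log ((g : ℝ → ℝ) p.1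
            / ES P p.1 (fun ω => Real.exp (c * X ω))))
          ≤ ⨆ p : Set.Icc (0:ℝ) 1, (1 / c) * Real.log
            ((Real.exp (c * ρ X) * ES P p.1 (fun ω => Real.exp (c * X ω)))
              / ES P p.1 (fun ω => Real.exp (c * X ω))) := hle
        _ = ρ X := hvalX
  · rintro ⟨G, hne, hprop, hrep⟩
    intro X Y hX hY hL1X hL1Y hvsd
    haveI : Nonempty (↥G) := hne.to_subtype
    obtain ⟨a, b, hBX, hBY⟩ := bdd_pair hc (hX : MemX P X) (hY : MemX P Y)
    have ha : 0 < a := hBX.apos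
    have hab : a ≤ b := hBX.ab
    have hES : ∀ p : Set.Icc (0:ℝ) 1,
        ES P p.1 (fun ω => Real.exp (c * Y ω)) ≤ ES P p.1 (fun ω => Real.exp (c * X ω)) :=
      fun p => ES_cmp_of_vSD hc hBX hBY hvsd p.2
    have hESX : ∀ p : Set.Icc (0:ℝ) 1,
        ES P p.1 (fun ω => Real.exp (c * X ω)) ∈ Set.Icc (-b) (-a) :=
      fun p => ES_bounds hBX p.2
    have hESY : ∀ p : Set.Icc (0:ℝ) 1,
        ES P p.1 (fun ω => Real.exp (c * Y ω)) ∈ Set.Icc (-b) (-a) :=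
      fun p => ES_bounds hBY p.2
    have hXneg : ∀ p : Set.Icc (0:ℝ) 1,
        ES P p.1 (fun ω => Real.exp (c * X ω)) < 0 :=
      fun p => lt_of_le_of_lt (hESX p).2 (by linarith)
    have hYneg : ∀ p : Set.Icc (0:ℝ) 1,
        ES P p.1 (fun ω => Real.exp (c * Y ω)) < 0 :=
      fun p => lt_of_le_of_lt (hESY p).2 (by linarith)
    set termX : ↥G → Set.Icc (0:ℝ) 1 → ℝ := fun g p =>
      (1 / c) * Real.log ((g : ℝ → ℝ) p.1
        / ES P p.1 (fun ω => Real.exp (c * X ω))) with htermX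
    set termY : ↥G → Set.Icc (0:ℝ) 1 → ℝ := fun g p =>
      (1 / c) * Real.log ((g : ℝ → ℝ) p.1
        / ES P p.1 (fun ω => Real.exp (c * Y ω))) with htermY
    have hgneg : ∀ (g : ↥G) (p : Set.Icc (0:ℝ) 1), (g : ℝ → ℝ) p.1 < 0 :=
      fun g p => (hprop g.1 g.2).2 p.1 p.2
    have hgmono : ∀ (g : ↥G), MonotoneOn (g : ℝ → ℝ) (Set.Icc 0 1) :=
      fun g => (hprop g.1 g.2).1
    have hg0 : ∀ (g : ↥G) (p : Set.Icc (0:ℝ) 1), (g : ℝ → ℝ) 0 ≤ (g : ℝ → ℝ) p.1 :=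
      fun g p => hgmono g ⟨le_rfl, zero_le_one⟩ p.2 p.2.1
    have hposX : ∀ (g : ↥G) (p : Set.Icc (0:ℝ) 1),
        0 < (g : ℝ → ℝ) p.1 / ES P p.1 (fun ω => Real.exp (c * X ω)) :=
      fun g p => div_pos_iff.mpr (Or.inr ⟨hgneg g p, hXneg p⟩)
    have hposY : ∀ (g : ↥G) (p : Set.Icc (0:ℝ) 1),
        0 < (g : ℝ → ℝ) p.1 / ES P p.1 (fun ω => Real.exp (c * Y ω)) :=
      fun g p => div_pos_iff.mpr (Or.inr ⟨hgneg g p, hYneg p⟩)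
    have htermle : ∀ (g : ↥G) (p : Set.Icc (0:ℝ) 1), termY g p ≤ termX g p := by
      intro g p
      refine mul_le_mul_of_nonneg_left ?_ (by positivity)
      apply Real.log_le_log (hposY g p)
      have e1 : (g : ℝ → ℝ) p.1 / ES P p.1 (fun ω => Real.exp (c * Y ω))
          = (-(g : ℝ → ℝ) p.1) / (-(ES P p.1 (fun ω => Real.exp (c * Y ω)))) := by
        rw [neg_div_neg_eq]
      have e2 : (g : ℝ → ℝ) p.1 / ES P p.1 (fun ω => Real.exp (c * X ω))
          = (-(g : ℝ → ℝ) p.1) / (-(ES P p.1 (fun ω => Real.exp (c * X ω)))) := by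
        rw [neg_div_neg_eq]
      rw [e1, e2]
      apply div_le_div₀ (by linarith [hgneg g p]) le_rfl (by linarith [(hESX p).2])
        (by linarith [hES p])
    have hbAX : ∀ g : ↥G, BddAbove (Set.range (termX g)) := by
      intro g
      refine ⟨(1 / c) * Real.log ((-(g : ℝ → ℝ) 0) / a), ?_⟩
      rintro _ ⟨p, rfl⟩
      refine mul_le_mul_of_nonneg_left ?_ (by positivity)
      apply Real.log_le_log (hposX g p)
      have e2 : (g : ℝ → ℝ) p.1 / ES P p.1 (fun ω => Real.exp (c * X ω))
          = (-(g : ℝ → ℝ) p.1) / (-(ES P p.1 (fun ω => Real.exp (c * X ω)))) := by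
        rw [neg_div_neg_eq]
      rw [e2]
      apply div_le_div₀ (by linarith [hgneg g ⟨0, le_rfl, zero_le_one⟩, hg0 g p])
        (by linarith [hg0 g p]) ha (by linarith [(hESX p).2])
    have hbAY : ∀ g : ↥G, BddAbove (Set.range (termY g)) := by
      intro g
      refine ⟨(1 / c) * Real.log ((-(g : ℝ → ℝ) 0) / a), ?_⟩
      rintro _ ⟨p, rfl⟩
      refine mul_le_mul_of_nonneg_left ?_ (by positivity)
      apply Real.log_le_log (hposY g p)
      have e2 : (g : ℝ → ℝ) p.1 / ES P p.1 (fun ω => Real.exp (c * Y ω))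
          = (-(g : ℝ → ℝ) p.1) / (-(ES P p.1 (fun ω => Real.exp (c * Y ω)))) := by
        rw [neg_div_neg_eq]
      rw [e2]
      apply div_le_div₀ (by linarith [hgneg g ⟨0, le_rfl, zero_le_one⟩, hg0 g p])
        (by linarith [hg0 g p]) ha (by linarith [(hESY p).2])
    set FX : ↥G → ℝ := fun g => ⨆ p : Set.Icc (0:ℝ) 1, termX g p with hFXdef
    set FY : ↥G → ℝ := fun g => ⨆ p : Set.Icc (0:ℝ) 1, termY g p with hFYdef
    have hFle : ∀ g : ↥G, FY g ≤ FX g := fun g =>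
      ciSup_le fun p => (htermle g p).trans (le_ciSup (hbAX g) p)
    set K : ℝ := (1 / c) * (Real.log b - Real.log a) with hK
    have hKle : ∀ g : ↥G, FX g ≤ FY g + K := by
      intro g
      refine ciSup_le fun p => ?_
      have hXlog : termX g p = (1 / c) * (Real.log (-(g : ℝ → ℝ) p.1)
          - Real.log (-(ES P p.1 (fun ω => Real.exp (c * X ω))))) := by
        rw [htermX]
        simp only
        rw [show (g : ℝ → ℝ) p.1 / ES P p.1 (fun ω => Real.exp (c * X ω))
            = (-(g : ℝ → ℝ) p.1) / (-(ES P p.1 (fun ω => Real.exp (c * X ω))))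
          from (neg_div_neg_eq _ _).symm]
        rw [Real.log_div (by linarith [hgneg g p]) (by linarith [(hESX p).2])]
      have hYlog : termY g p = (1 / c) * (Real.log (-(g : ℝ → ℝ) p.1)
          - Real.log (-(ES P p.1 (fun ω => Real.exp (c * Y ω))))) := by
        rw [htermY]
        simp only
        rw [show (g : ℝ → ℝ) p.1 / ES P p.1 (fun ω => Real.exp (c * Y ω))
            = (-(g : ℝ → ℝ) p.1) / (-(ES P p.1 (fun ω => Real.exp (c * Y ω))))
          from (neg_div_neg_eq _ _).symm]
        rw [Real.log_div (by linarith [hgneg g p]) (by linarith [(hESY p).2])]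
      have h1 : Real.log (-(ES P p.1 (fun ω => Real.exp (c * Y ω)))) ≤ Real.log b :=
        Real.log_le_log (by linarith [(hESY p).2]) (by linarith [(hESY p).1])
      have h2 : Real.log a ≤ Real.log (-(ES P p.1 (fun ω => Real.exp (c * X ω)))) :=
        Real.log_le_log ha (by linarith [(hESX p).2])
      have h3 : termX g p ≤ termY g p + K := by
        rw [hXlog, hYlog, hK]
        have hc' : 0 ≤ 1 / c := by positivity
        nlinarith [mul_le_mul_of_nonneg_left (by linarith [h1, h2] :
          Real.log (-(ES P p.1 (fun ω => Real.exp (c * Y ω))))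
            - Real.log (-(ES P p.1 (fun ω => Real.exp (c * X ω))))
            ≤ Real.log b - Real.log a) hc']
      exact h3.trans (by linarith [le_ciSup (hbAY g) p])
    rw [hrep X hX, hrep Y hY]
    show (⨅ g : ↥G, FY g) ≤ ⨅ g : ↥G, FX g
    by_cases hbb : BddBelow (Set.range FY)
    · exact ciInf_mono hbb hFle
    · have hbbX : ¬ BddBelow (Set.range FX) := by
        intro hbbX
        obtain ⟨m, hm⟩ := hbbX
        apply hbb
        refine ⟨m - K, ?_⟩
        rintro _ ⟨g, rfl⟩
        have h1 : m ≤ FX g := hm (Set.mem_range_self g)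
        linarith [hKle g]
      rw [Real.iInf_of_not_bddBelow hbb, Real.iInf_of_not_bddBelow hbbX]

end Paper
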